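/- arXiv:2002.11387 — 7 statements merged into one kernel-verified Lean document; each statement's English description precedes it below -/
import Mathlib

section
/- Fix a winner number k with 1 ≤ k ≤ n and assume b_{n−k+1} > 0. The minimum-Gini function g*_k is nondecreasing in p on the interval (0, Σ_{i=n−k+1}^n b_i]: if 0 < p ≤ p' ≤ Σ_{i=n−k+1}^n b_i then g*_k(p) ≤ g*_k(p'). -/
open Finset

/-- The ascending rearrangement of a vector. -/
noncomputable def sortedAsc {n : ℕ} (a : Fin n → ℝ) : Fin n → ℝ :=
  a ∘ Tuple.sort a

/-- The Gini index of an ascending-sorted nonnegative vector `y` on `Fin k`: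
`2 (∑ i, i * y_i) / (k ∑ i, y_i) - (k+1)/k` (with 1-based weights). -/
noncomputable def gini {k : ℕ} (y : Fin k → ℝ) : ℝ :=
  2 * (∑ i : Fin k, (((i : ℕ) : ℝ) + 1) * y i) / (k * ∑ i, y i) - ((k : ℝ) + 1) / k

/-- The flexible Gini index with winner number `k`: the Gini index of the top `k`
entries of the ascending rearrangement of the allocation. -/
noncomputable def flexGini {n : ℕ} (k : ℕ) (a : Fin n → ℝ) : ℝ :=
  if h : k ≤ n then
    gini (fun i : Fin k => sortedAsc a ⟨n - k + i, by have := i.isLt; omega⟩)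
  else 0

/-- Feasibility of allocation `a` for budgets `b`, winner number `k`, price `p`. -/
def Feasible {n : ℕ} (b : Fin n → ℝ) (k : ℕ) (p : ℝ) (a : Fin n → ℝ) : Prop :=
  (∀ i, 0 ≤ a i) ∧ (∑ i, a i = 1) ∧ (∀ i, a i * p ≤ b i) ∧
    n - k ≤ (Finset.univ.filter fun i => a i = 0).card

open Classical in
/-- The minimum flexible Gini index over feasible allocations (`1` if none exists). -/
noncomputable def gStar {n : ℕ} (b : Fin n → ℝ) (k : ℕ) (p : ℝ) : ℝ :=
  if ∃ a, Feasible b k p a then sInf (flexGini k '' {a | Feasible b k p a}) else 1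

/-- The maximum price for winner number `k` under Gini cap `g`. -/
noncomputable def pStar {n : ℕ} (b : Fin n → ℝ) (k : ℕ) (g : ℝ) : ℝ :=
  sSup {p : ℝ | 0 < p ∧ gStar b k p ≤ g}

/-- The Gini mechanism's price: the maximum of `pStar` over allowed winner numbers. -/
noncomputable def pStarK {n : ℕ} (b : Fin n → ℝ) (K : Finset ℕ) (g : ℝ) : ℝ :=
  sSup ((fun k => pStar b k g) '' (K : Set ℕ))

/-- The `(m+1)`-st smallest budget (0-based index `m`). -/
noncomputable def nthSmallest {n : ℕ} (b : Fin n → ℝ) (m : ℕ) : ℝ :=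
  if h : m < n then sortedAsc b ⟨m, h⟩ else 0

/-- The allocation cap `C` at price `p` for winner number `k`. -/
noncomputable def capOf {n : ℕ} (b : Fin n → ℝ) (k : ℕ) (p : ℝ) : ℝ :=
  sInf {C : ℝ | 0 < C ∧
    1 ≤ ∑ i ∈ Finset.univ.filter (fun i : Fin n => n - k ≤ (i : ℕ)),
        min (sortedAsc b i / p) C}

/-- The winner number chosen by the Gini mechanism (ties broken in favor of more winners). -/
noncomputable def mechWinnerNum {n : ℕ} (b : Fin n → ℝ) (K : Finset ℕ) (g : ℝ) : ℕ :=
  sSup {k | k ∈ K ∧ pStar b k g = pStarK b K g}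

/-- The allocation of the Gini mechanism: agents in the bottom `n - k` positions (by budget)
receive `0`; the `k` winners receive `min (bᵢ/p, C)` at the mechanism price `p`. -/
noncomputable def mechAlloc {n : ℕ} (b : Fin n → ℝ) (K : Finset ℕ) (g : ℝ) : Fin n → ℝ :=
  fun i =>
    if ((Tuple.sort b).symm i : ℕ) < n - mechWinnerNum b K g then 0
    else min (b i / pStarK b K g) (capOf b (mechWinnerNum b K g) (pStarK b K g))

/-- Agent `i`'s spending under the Gini mechanism. -/
noncomputable def spend {n : ℕ} (b : Fin n → ℝ) (K : Finset ℕ) (g : ℝ) (i : Fin n) : ℝ :=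
  mechAlloc b K g i * pStarK b K g

/-- Agent `i`'s utility under the Gini mechanism when her valuation is `v`. -/
noncomputable def util {n : ℕ} (b : Fin n → ℝ) (K : Finset ℕ) (g : ℝ) (i : Fin n) (v : ℝ) : ℝ :=
  mechAlloc b K g i * (v - pStarK b K g)

lemma gini_bounds {k : ℕ} (hk : 1 ≤ k) (y : Fin k → ℝ) (hy : ∀ i, 0 ≤ y i) :
    -2 ≤ gini y ∧ gini y ≤ 1 := by
  have hk0 : (0:ℝ) < k := by exact_mod_cast hk
  have hS : 0 ≤ ∑ i, y i := Finset.sum_nonneg fun i _ => hy i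
  have hS1 : 0 ≤ ∑ i : Fin k, (((i:ℕ):ℝ)+1) * y i :=
    Finset.sum_nonneg fun i _ => mul_nonneg (by positivity) (hy i)
  have hratio : ((k:ℝ)+1)/k ≤ 2 := by
    have hk1' : (1:ℝ) ≤ k := by exact_mod_cast hk
    rw [div_le_iff₀ hk0]; linarith
  have hratio1 : (1:ℝ) ≤ ((k:ℝ)+1)/k := by
    rw [le_div_iff₀ hk0]; linarith
  rcases eq_or_lt_of_le hS with h0 | hSpos
  · have hall : ∀ i ∈ Finset.univ, y i = 0 :=
      (Finset.sum_eq_zero_iff_of_nonneg (fun i _ => hy i)).1 h0.symm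
    have hS1' : ∑ i : Fin k, (((i:ℕ):ℝ)+1) * y i = 0 :=
      Finset.sum_eq_zero fun i hi => by rw [hall i hi, mul_zero]
    unfold gini
    rw [hS1', ← h0]
    constructor <;> simp <;> linarith
  · have hle' : ∑ i : Fin k, (((i:ℕ):ℝ)+1) * y i ≤ (k:ℝ) * ∑ i, y i := by
      rw [Finset.mul_sum]
      refine Finset.sum_le_sum fun i _ => mul_le_mul_of_nonneg_right ?_ (hy i)
      have : (i:ℕ) + 1 ≤ k := i.isLt
      exact_mod_cast this
    have hden : (0:ℝ) < (k:ℝ) * ∑ i, y i := by positivity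
    have h1 : 2 * (∑ i : Fin k, (((i:ℕ):ℝ)+1) * y i) / ((k:ℝ) * ∑ i, y i) ≤ 2 := by
      rw [div_le_iff₀ hden]; linarith
    have h2 : 0 ≤ 2 * (∑ i : Fin k, (((i:ℕ):ℝ)+1) * y i) / ((k:ℝ) * ∑ i, y i) := by
      positivity
    unfold gini
    constructor <;> linarith

/-- If `b_{n-k+1} > 0`, the minimum-Gini function `g*_k` is nondecreasing in
`p` on `(0, ∑_{i=n-k+1}^n b_i]`. -/
theorem gStar_mono {n : ℕ} (b : Fin n → ℝ) (hmono : Monotone b) (hnn : ∀ i, 0 ≤ b i)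
    (k : ℕ) (hk1 : 1 ≤ k) (hkn : k ≤ n) (hpos : 0 < b ⟨n - k, by omega⟩) :
    ∀ p p' : ℝ, 0 < p → p ≤ p' →
      p' ≤ (∑ i ∈ Finset.univ.filter (fun i : Fin n => n - k ≤ (i : ℕ)), b i) →
      gStar b k p ≤ gStar b k p' := by
  intro p p' hp hpp' _
  have hsub : {a : Fin n → ℝ | Feasible b k p' a} ⊆ {a | Feasible b k p a} := by
    rintro a ⟨h1, h2, h3, h4⟩
    refine ⟨h1, h2, fun i => ?_, h4⟩
    calc a i * p ≤ a i * p' := mul_le_mul_of_nonneg_left hpp' (h1 i)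
      _ ≤ b i := h3 i
  have hbound : ∀ a, Feasible b k p a → -2 ≤ flexGini k a ∧ flexGini k a ≤ 1 := by
    intro a ha
    unfold flexGini
    rw [dif_pos hkn]
    exact gini_bounds hk1 _ (fun i => ha.1 _)
  have hbdd : BddBelow (flexGini k '' {a | Feasible b k p a}) := by
    refine ⟨-2, ?_⟩
    rintro x ⟨a, ha, rfl⟩
    exact (hbound a ha).1
  unfold gStar
  by_cases h' : ∃ a, Feasible b k p' a
  · have h : ∃ a, Feasible b k p a := h'.imp fun a ha => hsub ha
    rw [if_pos h, if_pos h']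
    obtain ⟨a, ha⟩ := h'
    exact csInf_le_csInf hbdd ⟨_, Set.mem_image_of_mem _ ha⟩ (Set.image_mono hsub)
  · rw [if_neg h']
    by_cases h : ∃ a, Feasible b k p a
    · rw [if_pos h]
      obtain ⟨a, ha⟩ := h
      exact le_trans (csInf_le hbdd (Set.mem_image_of_mem _ ha)) (hbound a ha).2
    · rw [if_neg h]
end

section
/- Fix a winner number k with 1 ≤ k ≤ n and a price p > 0 with Σ_{i=n−k+1}^n b_i/p ≥ 1 and b_n > 0. Let C be the unique solution in (0, b_n/p] of Σ_{i=n−k+1}^n min{b_i/p, C} = 1. Then the cap-form allocation assigning a_i = 0 for i ≤ n−k and a_i = min{b_i/p, C} for i > n−k is feasible for price p and winner number k, and it minimizes the flexible Gini index among all feasible allocations for price p and winner number k. -/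
open Finset

section CapFormAux
open Finset
variable {n : ℕ}

lemma capAux_sortedAsc_mono (a : Fin n → ℝ) : Monotone (sortedAsc a) := Tuple.monotone_sort a

lemma capAux_sortedAsc_eq_self {a : Fin n → ℝ} (h : Monotone a) : sortedAsc a = a := by
  have := (Tuple.comp_sort_eq_comp_iff_monotone (f := a) (σ := Equiv.refl _)).mpr (by simpa using h)
  simpa [sortedAsc] using this.symm

lemma capAux_sum_sortedAsc (a : Fin n → ℝ) : ∑ i, sortedAsc a i = ∑ i, a i :=
  Equiv.sum_comp (Tuple.sort a) a

lemma capAux_card_filter_comp (σ : Equiv.Perm (Fin n)) (P : ℝ → Prop) [DecidablePred P]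
    (a : Fin n → ℝ) :
    (univ.filter fun j => P (a (σ j))).card = (univ.filter fun j => P (a j)).card := by
  apply Finset.card_bij (fun j _ => σ j)
  · intro j hj; simp only [mem_filter, mem_univ, true_and] at hj ⊢; exact hj
  · intro j₁ _ j₂ _ h; exact σ.injective h
  · intro j hj; refine ⟨σ.symm j, ?_, by simp⟩
    simp only [mem_filter, mem_univ, true_and] at hj ⊢; simpa using hj

lemma capAux_card_filter_le (m : ℕ) (hm : m ≤ n) :
    (univ.filter fun j : Fin n => m ≤ (j : ℕ)).card = n - m := by
  rw [show n - m = (Finset.range (n - m)).card from (Finset.card_range _).symm]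
  apply Finset.card_bij (fun (j : Fin n) _ => (j : ℕ) - m)
  · intro j hj; simp only [mem_filter, mem_univ, true_and] at hj
    simp only [Finset.mem_range]; have := j.isLt; omega
  · intro j₁ h₁ j₂ h₂ h; simp only [mem_filter, mem_univ, true_and] at h₁ h₂
    exact Fin.ext (by omega)
  · intro i hi; simp only [Finset.mem_range] at hi
    exact ⟨⟨m + i, by omega⟩, by simp, by simp⟩

lemma capAux_card_filter_lt (m : ℕ) (hm : m ≤ n) :
    (univ.filter fun j : Fin n => (j : ℕ) < m).card = m := by
  have h := Finset.card_filter_add_card_filter_not (s := (univ : Finset (Fin n)))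
      (p := fun j : Fin n => m ≤ (j : ℕ))
  rw [capAux_card_filter_le m hm, Finset.card_univ, Fintype.card_fin] at h
  have heq : (filter (fun j : Fin n => ¬ m ≤ (j:ℕ)) univ)
      = filter (fun j : Fin n => (j:ℕ) < m) univ := by
    apply Finset.filter_congr; intro j _; simp only [not_le]
  rw [heq] at h; omega

lemma capAux_sortedAsc_le_sortedAsc {x c : Fin n → ℝ} (h : ∀ j, x j ≤ c j) (i : Fin n) :
    sortedAsc x i ≤ sortedAsc c i := by
  by_contra hlt
  push_neg at hlt
  set v := sortedAsc x i with hv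
  have hA : n - (i:ℕ) ≤ (univ.filter fun j => v ≤ x j).card := by
    rw [← capAux_card_filter_comp (Tuple.sort x) (fun t => v ≤ t) x]
    calc n - (i:ℕ) = (univ.filter fun j : Fin n => (i:ℕ) ≤ (j:ℕ)).card :=
          (capAux_card_filter_le _ i.isLt.le).symm
      _ ≤ _ := by
          apply Finset.card_le_card
          apply Finset.monotone_filter_right
          intro j _ hj
          exact le_trans (le_refl v) (capAux_sortedAsc_mono x (Fin.le_def.mpr hj))
  have hB : (univ.filter fun j => v ≤ c j).card ≤ n - (i:ℕ) - 1 := by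
    rw [← capAux_card_filter_comp (Tuple.sort c) (fun t => v ≤ t) c]
    calc (univ.filter fun j : Fin n => v ≤ sortedAsc c j).card
        ≤ (univ.filter fun j : Fin n => (i:ℕ) + 1 ≤ (j:ℕ)).card := by
          apply Finset.card_le_card
          apply Finset.monotone_filter_right
          intro j _ hj
          by_contra hle
          have hji : (j:ℕ) ≤ (i:ℕ) := by omega
          have := capAux_sortedAsc_mono c (show j ≤ i from Fin.le_def.mpr hji)
          linarith
      _ = n - ((i:ℕ)+1) := capAux_card_filter_le _ (by have := i.isLt; omega)
      _ ≤ n - (i:ℕ) - 1 := by omega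
  have hAB : (univ.filter fun j => v ≤ x j) ⊆ (univ.filter fun j => v ≤ c j) := by
    apply Finset.monotone_filter_right
    intro j _ hj; exact le_trans hj (h j)
  have := Finset.card_le_card hAB
  have hi := i.isLt
  omega

lemma capAux_sorted_head_zero {a : Fin n → ℝ} {k : ℕ} (hnn : ∀ i, 0 ≤ a i)
    (hcard : n - k ≤ (univ.filter fun i => a i = 0).card) (j : Fin n) (hj : (j:ℕ) < n - k) :
    sortedAsc a j = 0 := by
  by_contra hne
  have h0 : 0 ≤ sortedAsc a j := hnn _
  have hpos : 0 < sortedAsc a j := lt_of_le_of_ne h0 (Ne.symm hne)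
  have hsub : (univ.filter fun l => sortedAsc a l = 0)
      ⊆ univ.filter fun l : Fin n => (l:ℕ) < (j:ℕ) := by
    intro l hl
    simp only [mem_filter, mem_univ, true_and] at hl ⊢
    by_contra hge
    push_neg at hge
    have : sortedAsc a j ≤ sortedAsc a l := capAux_sortedAsc_mono a (Fin.le_def.mpr hge)
    linarith [hl ▸ this]
  have h1 : (univ.filter fun l => sortedAsc a l = 0).card
      = (univ.filter fun l => a l = 0).card :=
    capAux_card_filter_comp (Tuple.sort a) (fun t => t = 0) a
  have h2 := Finset.card_le_card hsub
  rw [capAux_card_filter_lt _ j.isLt.le] at h2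
  omega

lemma capAux_sum_tail {k : ℕ} (hkn : k ≤ n) (f : Fin n → ℝ) :
    ∑ i : Fin k, f ⟨n - k + (i:ℕ), by have := i.isLt; omega⟩
      = ∑ j ∈ univ.filter (fun j : Fin n => n - k ≤ (j:ℕ)), f j := by
  apply Finset.sum_bij
    (fun (i : Fin k) _ => (⟨n - k + (i:ℕ), by have := i.isLt; omega⟩ : Fin n))
  · intro i _; simp only [mem_filter, mem_univ, true_and]; omega
  · intro i₁ _ i₂ _ h
    have := congrArg Fin.val h
    simp only at this
    exact Fin.ext (by omega)
  · intro j hj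
    simp only [mem_filter, mem_univ, true_and] at hj
    exact ⟨⟨(j:ℕ) - (n - k), by have := j.isLt; omega⟩, mem_univ _,
      Fin.ext (by simp only []; omega)⟩
  · intro i _; rfl

lemma capAux_abel {k : ℕ} (w : Fin k → ℝ) :
    ∑ m ∈ Finset.range k, ∑ i ∈ univ.filter (fun i : Fin k => (i:ℕ) < m), w i
      = (k : ℝ) * ∑ i, w i - ∑ i : Fin k, (((i:ℕ):ℝ) + 1) * w i := by
  have step1 : ∀ m, ∑ i ∈ univ.filter (fun i : Fin k => (i:ℕ) < m), w i
      = ∑ i : Fin k, if (i:ℕ) < m then w i else 0 := fun m => Finset.sum_filter _ _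
  simp only [step1]
  rw [Finset.sum_comm]
  have step2 : ∀ i : Fin k, (∑ m ∈ Finset.range k, if (i:ℕ) < m then w i else 0)
      = ((k : ℝ) - 1 - (i:ℕ)) * w i := by
    intro i
    rw [← Finset.sum_filter, Finset.sum_const, nsmul_eq_mul]
    have hcard : ((Finset.range k).filter fun m => (i:ℕ) < m).card = k - 1 - (i:ℕ) := by
      have heq : ((Finset.range k).filter fun m => (i:ℕ) < m) = Finset.Ico ((i:ℕ)+1) k := by
        ext m; simp [Finset.mem_Ico]; omega
      rw [heq, Nat.card_Ico]; omega
    rw [hcard]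
    have hik := i.isLt
    have hcast : ((k - 1 - (i:ℕ) : ℕ) : ℝ) = (k:ℝ) - 1 - (i:ℕ) := by
      push_cast [Nat.cast_sub (by omega : (i:ℕ) ≤ k - 1), Nat.cast_sub (by omega : 1 ≤ k)]
      ring
    rw [hcast]
  simp only [step2]
  rw [Finset.mul_sum, ← Finset.sum_sub_distrib]
  apply Finset.sum_congr rfl
  intro i _
  ring

lemma capAux_gini_le_of_prefix {k : ℕ} (hk : 1 ≤ k) (y z : Fin k → ℝ)
    (hy : ∑ i, y i = 1) (hz : ∑ i, z i = 1)
    (hpre : ∀ m : ℕ, ∑ i ∈ univ.filter (fun i : Fin k => (i:ℕ) < m), y i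
        ≤ ∑ i ∈ univ.filter (fun i : Fin k => (i:ℕ) < m), z i) :
    gini z ≤ gini y := by
  have hsum : ∑ m ∈ Finset.range k, ∑ i ∈ univ.filter (fun i : Fin k => (i:ℕ) < m), y i
      ≤ ∑ m ∈ Finset.range k, ∑ i ∈ univ.filter (fun i : Fin k => (i:ℕ) < m), z i :=
    Finset.sum_le_sum (fun m _ => hpre m)
  rw [capAux_abel y, capAux_abel z, hy, hz] at hsum
  have hS : ∑ i : Fin k, (((i:ℕ):ℝ) + 1) * z i ≤ ∑ i : Fin k, (((i:ℕ):ℝ) + 1) * y i := by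
    linarith
  unfold gini
  rw [hy, hz]
  have hk' : (0:ℝ) < k := by exact_mod_cast hk
  apply sub_le_sub_right
  gcongr

lemma capAux_prefix_le {k : ℕ} {y z β : Fin k → ℝ} {Cc : ℝ}
    (hymono : Monotone y) (hyle : ∀ i, y i ≤ β i) (hzdef : ∀ i, z i = min (β i) Cc)
    (hy : ∑ i, y i = 1) (hz : ∑ i, z i = 1) (m : ℕ) :
    ∑ i ∈ univ.filter (fun i : Fin k => (i:ℕ) < m), y i
      ≤ ∑ i ∈ univ.filter (fun i : Fin k => (i:ℕ) < m), z i := by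
  by_contra hgt
  push_neg at hgt
  obtain ⟨i, hi, hyz⟩ : ∃ i ∈ univ.filter (fun i : Fin k => (i:ℕ) < m), z i < y i := by
    by_contra hno
    push_neg at hno
    exact absurd (Finset.sum_le_sum hno) (not_le.mpr hgt)
  simp only [mem_filter, mem_univ, true_and] at hi
  have hCy : Cc < y i := by
    by_contra hle
    push_neg at hle
    have : y i ≤ z i := by rw [hzdef i]; exact le_min (hyle i) hle
    linarith
  have hsuf : ∀ j ∈ univ.filter (fun j : Fin k => ¬ (j:ℕ) < m), z j ≤ y j := by
    intro j hj
    simp only [mem_filter, mem_univ, true_and, not_lt] at hj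
    have hij : i ≤ j := Fin.le_def.mpr (by omega)
    calc z j = min (β j) Cc := hzdef j
      _ ≤ Cc := min_le_right _ _
      _ ≤ y i := hCy.le
      _ ≤ y j := hymono hij
  have hsplit_y := Finset.sum_filter_add_sum_filter_not univ (fun i : Fin k => (i:ℕ) < m) y
  have hsplit_z := Finset.sum_filter_add_sum_filter_not univ (fun i : Fin k => (i:ℕ) < m) z
  have hsufsum := Finset.sum_le_sum hsuf
  rw [hy] at hsplit_y
  rw [hz] at hsplit_z
  linarith

end CapFormAux

/-- If `∑_{i=n-k+1}^n bᵢ/p ≥ 1` and `b_n > 0`, and `C ∈ (0, b_n/p]` solves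
`∑_{i=n-k+1}^n min (bᵢ/p) C = 1`, then the cap-form allocation (`0` for `i ≤ n-k` and
`min (bᵢ/p) C` for `i > n-k`) is feasible for price `p` and winner number `k`, and it minimizes
the flexible Gini index among all feasible allocations. -/
theorem capForm_minimizes_gini {n : ℕ} (b : Fin n → ℝ) (hmono : Monotone b)
    (hnn : ∀ i, 0 ≤ b i) (k : ℕ) (hk1 : 1 ≤ k) (hkn : k ≤ n) (p : ℝ) (hp : 0 < p)
    (hbn : 0 < b ⟨n - 1, by omega⟩)
    (hsum : 1 ≤ ∑ i ∈ Finset.univ.filter (fun i : Fin n => n - k ≤ (i : ℕ)), b i / p)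
    (C : ℝ) (hC : C ∈ Set.Ioc 0 (b ⟨n - 1, by omega⟩ / p))
    (hCeq : ∑ i ∈ Finset.univ.filter (fun i : Fin n => n - k ≤ (i : ℕ)),
        min (b i / p) C = 1) :
    Feasible b k p (fun i : Fin n => if (i : ℕ) < n - k then 0 else min (b i / p) C) ∧
      ∀ a : Fin n → ℝ, Feasible b k p a →
        flexGini k (fun i : Fin n => if (i : ℕ) < n - k then 0 else min (b i / p) C)
          ≤ flexGini k a := by
  obtain ⟨hC0, hCbn⟩ := hC
  set A : Fin n → ℝ := fun i : Fin n => if (i:ℕ) < n - k then 0 else min (b i / p) C with hA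
  have hAnn : ∀ i, 0 ≤ A i := by
    intro i
    by_cases hi : (i:ℕ) < n - k
    · simp [hA, hi]
    · simp only [hA, if_neg hi]
      exact le_min (div_nonneg (hnn i) hp.le) hC0.le
  have hAmono : Monotone A := by
    intro i j hij
    have hij' : (i:ℕ) ≤ (j:ℕ) := hij
    by_cases hi : (i:ℕ) < n - k
    · simp only [hA, if_pos hi]
      exact hAnn j
    · have hj : ¬ (j:ℕ) < n - k := by omega
      simp only [hA, if_neg hi, if_neg hj]
      exact min_le_min (by gcongr; exact hmono hij) le_rfl
  have hAsum : ∑ i, A i = 1 := by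
    have hsplit := Finset.sum_filter_add_sum_filter_not univ (fun i : Fin n => n - k ≤ (i:ℕ)) A
    have h1 : ∑ i ∈ univ.filter (fun i : Fin n => n - k ≤ (i:ℕ)), A i
        = ∑ i ∈ univ.filter (fun i : Fin n => n - k ≤ (i:ℕ)), min (b i / p) C := by
      apply Finset.sum_congr rfl
      intro i hi
      simp only [mem_filter, mem_univ, true_and] at hi
      simp [hA, Nat.not_lt.mpr hi]
    have h2 : ∑ i ∈ univ.filter (fun i : Fin n => ¬ n - k ≤ (i:ℕ)), A i = 0 := by
      apply Finset.sum_eq_zero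
      intro i hi
      simp only [mem_filter, mem_univ, true_and, not_le] at hi
      simp [hA, hi]
    rw [h1, hCeq, h2] at hsplit
    linarith
  have hfeas : Feasible b k p A := by
    refine ⟨hAnn, hAsum, ?_, ?_⟩
    · intro i
      by_cases hi : (i:ℕ) < n - k
      · simp [hA, hi, hnn i]
      · simp only [hA, if_neg hi]
        calc min (b i / p) C * p ≤ (b i / p) * p :=
              mul_le_mul_of_nonneg_right (min_le_left _ _) hp.le
          _ = b i := div_mul_cancel₀ _ hp.ne'
    · have hsub : (univ.filter fun i : Fin n => (i:ℕ) < n - k)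
          ⊆ univ.filter (fun i => A i = 0) := by
        intro i hi
        simp only [mem_filter, mem_univ, true_and] at hi ⊢
        simp [hA, hi]
      calc n - k = (univ.filter fun i : Fin n => (i:ℕ) < n - k).card :=
            (capAux_card_filter_lt _ (by omega)).symm
        _ ≤ _ := Finset.card_le_card hsub
  refine ⟨hfeas, ?_⟩
  intro a ha
  obtain ⟨ha0, hasum, hab, hacard⟩ := ha
  have hunf : ∀ w : Fin n → ℝ, flexGini k w
      = gini (fun i : Fin k => sortedAsc w ⟨n - k + (i:ℕ), by have := i.isLt; omega⟩) :=
    fun w => dif_pos hkn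
  rw [hunf, hunf]
  set y : Fin k → ℝ :=
    fun i : Fin k => sortedAsc a ⟨n - k + (i:ℕ), by have := i.isLt; omega⟩ with hy
  set z : Fin k → ℝ :=
    fun i : Fin k => sortedAsc A ⟨n - k + (i:ℕ), by have := i.isLt; omega⟩ with hzd
  set β : Fin k → ℝ :=
    fun i : Fin k => b ⟨n - k + (i:ℕ), by have := i.isLt; omega⟩ / p with hβ
  have hsA : sortedAsc A = A := capAux_sortedAsc_eq_self hAmono
  have hzmin : ∀ i, z i = min (β i) C := by
    intro i
    simp only [hzd, hsA]
    simp only [hA, hβ]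
    rw [if_neg (by omega)]
  have hzsum : ∑ i, z i = 1 := by
    have := capAux_sum_tail hkn (fun j : Fin n => min (b j / p) C)
    calc ∑ i, z i
        = ∑ i : Fin k, (fun j : Fin n => min (b j / p) C)
            ⟨n - k + (i:ℕ), by have := i.isLt; omega⟩ := by
          apply Finset.sum_congr rfl
          intro i _
          exact hzmin i
      _ = 1 := by rw [this]; exact hCeq
  have hysum : ∑ i, y i = 1 := by
    have hsplit := Finset.sum_filter_add_sum_filter_not univ
        (fun j : Fin n => n - k ≤ (j:ℕ)) (sortedAsc a)
    have htail := capAux_sum_tail hkn (sortedAsc a)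
    have hhead : ∑ j ∈ univ.filter (fun j : Fin n => ¬ n - k ≤ (j:ℕ)), sortedAsc a j = 0 := by
      apply Finset.sum_eq_zero
      intro j hj
      simp only [mem_filter, mem_univ, true_and, not_le] at hj
      exact capAux_sorted_head_zero ha0 hacard j hj
    have htot : ∑ j, sortedAsc a j = 1 := by rw [capAux_sum_sortedAsc]; exact hasum
    rw [hhead, add_zero, ← htail, htot] at hsplit
    exact hsplit
  have hymono : Monotone y := by
    intro i j hij
    exact capAux_sortedAsc_mono a (Fin.le_def.mpr (by simp only []; omega))
  have hyle : ∀ i, y i ≤ β i := by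
    intro i
    have hptle : ∀ j : Fin n, a j ≤ b j / p := fun j => (le_div_iff₀ hp).mpr (hab j)
    have hbpmono : Monotone (fun j : Fin n => b j / p) := by
      intro i' j' h'
      simpa [div_eq_mul_inv] using mul_le_mul_of_nonneg_right (hmono h') (by positivity : (0:ℝ) ≤ p⁻¹)
    have := capAux_sortedAsc_le_sortedAsc hptle
      (⟨n - k + (i:ℕ), by have := i.isLt; omega⟩ : Fin n)
    rwa [capAux_sortedAsc_eq_self hbpmono] at this
  have hpre := fun m => capAux_prefix_le hymono hyle hzmin hysum hzsum m
  exact capAux_gini_le_of_prefix hk1 y z hysum hzsum hpre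
end

section
/- Fix a winner number k with 1 ≤ k ≤ n and a Gini cap g ∈ (0,1). The maximum price p*_k(b) is nondecreasing in every coordinate of the budget profile b: if b' ≥ b coordinatewise (and both profiles have positive (n−k+1)-st smallest budget so that the maximum prices exist), then p*_k(b') ≥ p*_k(b). Consequently, for any finite set K of allowed winner numbers, the Gini mechanism's price p*(b) = max_{k∈K} p*_k(b) is also nondecreasing in every coordinate. -/
open Finset

lemma gini_ge_neg_two {k : ℕ} (y : Fin k → ℝ) (h0 : ∀ i, 0 ≤ y i) : -2 ≤ gini y := by
  rw [gini]
  have hnum : 0 ≤ 2 * ∑ i : Fin k, (((i : ℕ) : ℝ) + 1) * y i :=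
    mul_nonneg (by norm_num)
      (Finset.sum_nonneg fun i _ => mul_nonneg (by positivity) (h0 i))
  have hden : 0 ≤ (k : ℝ) * ∑ i, y i :=
    mul_nonneg (Nat.cast_nonneg _) (Finset.sum_nonneg fun i _ => h0 i)
  have hfrac : 0 ≤ 2 * (∑ i : Fin k, (((i : ℕ) : ℝ) + 1) * y i) / ((k : ℝ) * ∑ i, y i) :=
    div_nonneg hnum hden
  have hk2 : ((k : ℝ) + 1) / k ≤ 2 := by
    rcases Nat.eq_zero_or_pos k with rfl | hk
    · norm_num
    · rw [div_le_iff₀ (by exact_mod_cast hk)]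
      have h1 : (1 : ℝ) ≤ (k : ℝ) := by exact_mod_cast hk
      linarith
  linarith

lemma flexGini_ge_neg_two {n : ℕ} (k : ℕ) (a : Fin n → ℝ) (h0 : ∀ i, 0 ≤ a i) :
    -2 ≤ flexGini k a := by
  unfold flexGini
  split
  · exact gini_ge_neg_two _ (fun i => h0 _)
  · norm_num

lemma Feasible_mono {n : ℕ} {b b' : Fin n → ℝ} {k : ℕ} {p : ℝ} {a : Fin n → ℝ}
    (hle : ∀ i, b i ≤ b' i) (ha : Feasible b k p a) : Feasible b' k p a :=
  ⟨ha.1, ha.2.1, fun i => le_trans (ha.2.2.1 i) (hle i), ha.2.2.2⟩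

lemma gStar_anti {n : ℕ} {b b' : Fin n → ℝ} {k : ℕ} {p : ℝ}
    (hle : ∀ i, b i ≤ b' i) (hex : ∃ a, Feasible b k p a) :
    gStar b' k p ≤ gStar b k p := by
  classical
  obtain ⟨a, ha⟩ := hex
  have ha' : Feasible b' k p a := Feasible_mono hle ha
  rw [gStar, if_pos ⟨a, ha'⟩, gStar, if_pos ⟨a, ha⟩]
  apply csInf_le_csInf
  · refine ⟨-2, ?_⟩
    rintro x ⟨c, hc, rfl⟩
    exact flexGini_ge_neg_two k c hc.1
  · exact ⟨flexGini k a, a, ha, rfl⟩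
  · exact Set.image_mono (fun c hc => Feasible_mono hle hc)

lemma bddAbove_priceSet {n : ℕ} (b' : Fin n → ℝ) (k : ℕ) {g : ℝ} (hg1 : g < 1) :
    BddAbove {p : ℝ | 0 < p ∧ gStar b' k p ≤ g} := by
  classical
  refine ⟨∑ i, b' i, ?_⟩
  rintro p ⟨hp0, hpg⟩
  have hex : ∃ a, Feasible b' k p a := by
    by_contra h
    rw [gStar, if_neg h] at hpg
    linarith
  obtain ⟨a, h0, h1, h2, _⟩ := hex
  calc p = ∑ i, a i * p := by rw [← Finset.sum_mul, h1, one_mul]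
    _ ≤ ∑ i, b' i := Finset.sum_le_sum fun i _ => h2 i

/-- The maximum price `p*_k(b)` is nondecreasing in every coordinate of the
budget profile: if `b' ≥ b` coordinatewise (both sorted, with positive `(n-k+1)`-st smallest
budget), then `p*_k(b') ≥ p*_k(b)`; consequently the Gini mechanism's price
`p*(b) = max_{k ∈ K} p*_k(b)` is also nondecreasing. -/
theorem pStar_mono {n : ℕ} (g : ℝ) (hg : g ∈ Set.Ioo (0 : ℝ) 1)
    (b b' : Fin n → ℝ) (hmono : Monotone b) (hmono' : Monotone b')
    (hnn : ∀ i, 0 ≤ b i) (hle : ∀ i, b i ≤ b' i) :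
    (∀ k : ℕ, 1 ≤ k → k ≤ n → 0 < nthSmallest b (n - k) → pStar b k g ≤ pStar b' k g) ∧
      ∀ K : Finset ℕ, K.Nonempty → (∀ k ∈ K, 1 ≤ k ∧ k ≤ n) →
        (∀ k ∈ K, 0 < nthSmallest b (n - k)) →
        pStarK b K g ≤ pStarK b' K g := by
  classical
  have key : ∀ k : ℕ,
      {p : ℝ | 0 < p ∧ gStar b k p ≤ g} ⊆ {p : ℝ | 0 < p ∧ gStar b' k p ≤ g} := by
    intro k p hp
    obtain ⟨hp0, hpg⟩ := hp
    have hex : ∃ a, Feasible b k p a := by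
      by_contra h
      rw [gStar, if_neg h] at hpg
      linarith [hg.2]
    exact ⟨hp0, le_trans (gStar_anti hle hex) hpg⟩
  have hkmono : ∀ k : ℕ, pStar b k g ≤ pStar b' k g := by
    intro k
    rcases Set.eq_empty_or_nonempty {p : ℝ | 0 < p ∧ gStar b k p ≤ g} with hS | hS
    · rw [pStar, hS, Real.sSup_empty, pStar]
      exact Real.sSup_nonneg (fun x hx => le_of_lt hx.1)
    · exact csSup_le_csSup (bddAbove_priceSet b' k hg.2) hS (key k)
  refine ⟨fun k _ _ _ => hkmono k, ?_⟩
  intro K hKne _ _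
  rw [pStarK, pStarK]
  apply csSup_le (Set.Nonempty.image _ (Finset.coe_nonempty.mpr hKne))
  rintro x ⟨k, hk, rfl⟩
  exact le_trans (hkmono k)
    (le_csSup ((K.finite_toSet.image _).bddAbove) ⟨k, hk, rfl⟩)
end

section
/- Fix a winner number k with 1 ≤ k ≤ n, a Gini cap g ∈ (0,1), an agent i, and the other agents' budgets b_{−i}. Then the ratio b_i / p*_k(b_i, b_{−i}) is nondecreasing in b_i (on the domain where p*_k is defined). Consequently, for any finite set K of allowed winner numbers, b_i / p*(b_i, b_{−i}) with p*(b) = max_{k∈K} p*_k(b) is also nondecreasing in b_i. -/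
open Finset

section Aux

variable {n : ℕ}

lemma sortedAsc_mono (b : Fin n → ℝ) : Monotone (sortedAsc b) := Tuple.monotone_sort b

/-- Lower bound on gini for nonneg vectors. -/
lemma gini_lb {k : ℕ} (hk : 1 ≤ k) (y : Fin k → ℝ) (hy : ∀ i, 0 ≤ y i) : -2 ≤ gini y := by
  have hk' : (1:ℝ) ≤ (k:ℝ) := by exact_mod_cast hk
  have hS : (0:ℝ) ≤ ∑ i : Fin k, (((i:ℕ):ℝ)+1) * y i :=
    Finset.sum_nonneg fun i _ => mul_nonneg (by positivity) (hy i)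
  have hT : (0:ℝ) ≤ (k:ℝ) * ∑ i, y i :=
    mul_nonneg (by positivity) (Finset.sum_nonneg fun i _ => hy i)
  have h1 : (0:ℝ) ≤ 2 * (∑ i : Fin k, (((i:ℕ):ℝ)+1) * y i) / ((k:ℝ) * ∑ i, y i) :=
    div_nonneg (by linarith) hT
  have h2 : ((k:ℝ)+1)/(k:ℝ) ≤ 2 := by rw [div_le_iff₀ (by linarith)]; linarith
  unfold gini; linarith

lemma flexGini_lb {k : ℕ} (hk : 1 ≤ k) (a : Fin n → ℝ) (ha : ∀ j, 0 ≤ a j) :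
    -2 ≤ flexGini k a := by
  unfold flexGini
  split
  · exact gini_lb hk _ fun i => ha _
  · norm_num

lemma sum_weights (k : ℕ) : ∑ i : Fin k, (((i:ℕ):ℝ)+1) = k*(k+1)/2 := by
  induction k with
  | zero => simp
  | succ m ih =>
    rw [Fin.sum_univ_castSucc]
    simp only [Fin.coe_castSucc, Fin.val_last] at *
    rw [ih]; push_cast; ring

lemma gini_const {k : ℕ} (hk : 1 ≤ k) {c : ℝ} (hc : 0 < c) : gini (fun _ : Fin k => c) = 0 := by
  have hk' : (0:ℝ) < (k:ℝ) := by exact_mod_cast hk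
  unfold gini
  rw [Finset.sum_const, ← Finset.sum_mul, sum_weights]
  simp only [Finset.card_univ, Fintype.card_fin, nsmul_eq_mul]
  field_simp
  ring

end Aux

section Aux2

variable {n : ℕ}

/-- Equal allocation among the `k` agents with largest budgets. -/
noncomputable def eqAlloc (b : Fin n → ℝ) (k : ℕ) : Fin n → ℝ :=
  fun j => if ((Tuple.sort b).symm j : ℕ) < n - k then 0 else (k:ℝ)⁻¹

/-- The step function. -/
noncomputable def stepFun (n k : ℕ) : Fin n → ℝ :=
  fun m => if (m : ℕ) < n - k then 0 else (k:ℝ)⁻¹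

lemma stepFun_monotone (n k : ℕ) : Monotone (stepFun n k) := by
  intro m m' h
  have h' : (m:ℕ) ≤ (m':ℕ) := h
  unfold stepFun
  split_ifs with h1 h2 h2
  · exact le_refl 0
  · positivity
  · omega
  · exact le_refl _

lemma sortedAsc_eqAlloc (b : Fin n → ℝ) (k : ℕ) :
    sortedAsc (eqAlloc b k) = stepFun n k := by
  have h1 : eqAlloc b k = stepFun n k ∘ (Tuple.sort b).symm := rfl
  have h2 : sortedAsc (stepFun n k ∘ (Tuple.sort b).symm) = sortedAsc (stepFun n k) := by
    unfold sortedAsc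
    exact Tuple.comp_perm_comp_sort_eq_comp_sort (σ := (Tuple.sort b).symm)
  have h3 : sortedAsc (stepFun n k) = stepFun n k := by
    unfold sortedAsc
    rw [Tuple.sort_eq_refl_iff_monotone.mpr (stepFun_monotone n k)]
    rfl
  rw [h1, h2, h3]

end Aux2

section Aux3

variable {n : ℕ}

lemma eqAlloc_sum {b : Fin n → ℝ} {k : ℕ} (hk1 : 1 ≤ k) (hk2 : k ≤ n) :
    ∑ j, eqAlloc b k j = 1 := by
  have hkR : ((k:ℝ)) ≠ 0 := by positivity
  have h1 : ∑ j, eqAlloc b k j = ∑ m, stepFun n k m :=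
    Equiv.sum_comp (Tuple.sort b).symm (stepFun n k)
  rw [h1]
  have h2 : ∑ m, stepFun n k m
      = ∑ m ∈ Finset.range n, (if m < n - k then (0:ℝ) else (k:ℝ)⁻¹) :=
    Fin.sum_univ_eq_sum_range (fun m => if m < n - k then (0:ℝ) else (k:ℝ)⁻¹) n
  rw [h2, Finset.range_eq_Ico,
    ← Finset.sum_Ico_consecutive _ (Nat.zero_le (n-k)) (by omega : n - k ≤ n)]
  have h3 : ∑ m ∈ Finset.Ico 0 (n-k), (if m < n - k then (0:ℝ) else (k:ℝ)⁻¹) = 0 :=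
    Finset.sum_eq_zero fun m hm => if_pos (Finset.mem_Ico.mp hm).2
  have h4 : ∑ m ∈ Finset.Ico (n-k) n, (if m < n - k then (0:ℝ) else (k:ℝ)⁻¹)
      = (k:ℝ) * (k:ℝ)⁻¹ := by
    rw [Finset.sum_congr rfl fun m hm =>
      if_neg (by have := (Finset.mem_Ico.mp hm).1; omega)]
    rw [Finset.sum_const, Nat.card_Ico, nsmul_eq_mul]
    congr 1
    have : n - (n - k) = k := by omega
    exact_mod_cast congrArg (Nat.cast : ℕ → ℝ) this
  rw [h3, h4, zero_add, mul_inv_cancel₀ hkR]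

lemma card_filter_lt_nk (k : ℕ) (hk2 : k ≤ n) :
    (Finset.univ.filter fun m : Fin n => (m:ℕ) < n - k).card = n - k := by
  rw [Finset.card_filter]
  rw [Fin.sum_univ_eq_sum_range (fun m => if m < n - k then 1 else 0) n]
  rw [← Finset.card_filter]
  have : (Finset.range n).filter (fun m => m < n - k) = Finset.range (n-k) := by
    ext m; simp only [Finset.mem_filter, Finset.mem_range]; omega
  rw [this, Finset.card_range]

lemma eqAlloc_card {b : Fin n → ℝ} {k : ℕ} (hk1 : 1 ≤ k) (hk2 : k ≤ n) :
    n - k ≤ (Finset.univ.filter fun j => eqAlloc b k j = 0).card := by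
  classical
  have hkR : ((k:ℝ))⁻¹ ≠ 0 := by positivity
  have hsub : (Finset.univ.filter fun j : Fin n => ((Tuple.sort b).symm j : ℕ) < n - k)
      ⊆ Finset.univ.filter fun j => eqAlloc b k j = 0 := by
    intro j hj
    simp only [Finset.mem_filter, Finset.mem_univ, true_and] at hj ⊢
    exact if_pos hj
  refine le_trans (le_of_eq ?_) (Finset.card_le_card hsub)
  have hmap : (Finset.univ.filter fun j : Fin n => ((Tuple.sort b).symm j : ℕ) < n - k)
      = Finset.map (Tuple.sort b).toEmbedding
          (Finset.univ.filter fun m : Fin n => (m:ℕ) < n - k) := by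
    ext j
    simp only [Finset.mem_filter, Finset.mem_univ, true_and, Finset.mem_map,
      Equiv.coe_toEmbedding]
    constructor
    · intro h; exact ⟨(Tuple.sort b).symm j, h, by simp⟩
    · rintro ⟨m, hm, rfl⟩; simpa using hm
  rw [hmap, Finset.card_map, card_filter_lt_nk k hk2]

lemma eqAlloc_feasible {b : Fin n → ℝ} {k : ℕ} {p : ℝ}
    (hb : ∀ j, 0 ≤ b j) (hk1 : 1 ≤ k) (hk2 : k ≤ n) (hp : 0 < p)
    (hpm : p ≤ k * nthSmallest b (n - k)) :
    Feasible b k p (eqAlloc b k) := by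
  have hkR : (0:ℝ) < (k:ℝ) := by exact_mod_cast hk1
  have hnk : n - k < n := by omega
  refine ⟨fun j => ?_, eqAlloc_sum hk1 hk2, fun j => ?_, eqAlloc_card hk1 hk2⟩
  · unfold eqAlloc; split_ifs
    · exact le_refl 0
    · positivity
  · unfold eqAlloc
    split_ifs with h
    · simpa using hb j
    · -- b j = sortedAsc b ((Tuple.sort b).symm j) ≥ nthSmallest b (n-k)
      have hbj : b j = sortedAsc b ((Tuple.sort b).symm j) := by
        unfold sortedAsc; simp
      have hle : nthSmallest b (n - k) ≤ b j := by
        rw [hbj, nthSmallest, dif_pos hnk]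
        exact sortedAsc_mono b (by simpa [Fin.le_def] using not_lt.mp h)
      rw [inv_mul_eq_div, div_le_iff₀ hkR]
      calc p ≤ k * nthSmallest b (n-k) := hpm
        _ ≤ k * b j := by nlinarith
        _ = b j * k := by ring

lemma flexGini_eqAlloc {b : Fin n → ℝ} {k : ℕ} (hk1 : 1 ≤ k) (hk2 : k ≤ n) :
    flexGini k (eqAlloc b k) = 0 := by
  have hkR : (0:ℝ) < (k:ℝ)⁻¹ := by
    have : (0:ℝ) < (k:ℝ) := by exact_mod_cast hk1
    positivity
  rw [flexGini, dif_pos hk2]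
  have : (fun i : Fin k => sortedAsc (eqAlloc b k) ⟨n - k + i, by have := i.isLt; omega⟩)
      = fun _ : Fin k => (k:ℝ)⁻¹ := by
    funext i
    rw [sortedAsc_eqAlloc]
    unfold stepFun
    exact if_neg (by simp only [Fin.val_mk]; omega)
  rw [this, gini_const hk1 hkR]

end Aux3

section Aux4

variable {n : ℕ} {g : ℝ}

lemma gStar_le_flexGini {b : Fin n → ℝ} {k : ℕ} {p : ℝ} (hk : 1 ≤ k) {a : Fin n → ℝ}
    (ha : Feasible b k p a) : gStar b k p ≤ flexGini k a := by
  classical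
  rw [gStar, if_pos ⟨a, ha⟩]
  refine csInf_le ⟨-2, ?_⟩ ⟨a, ha, rfl⟩
  rintro z ⟨a', ha', rfl⟩
  exact flexGini_lb hk a' ha'.1

lemma priceSet_bddAbove (hg1 : g < 1) (b : Fin n → ℝ) (k : ℕ) :
    BddAbove {p : ℝ | 0 < p ∧ gStar b k p ≤ g} := by
  classical
  refine ⟨∑ j, b j, fun p hp => ?_⟩
  obtain ⟨hp0, hpg⟩ := hp
  have hex : ∃ a, Feasible b k p a := by
    by_contra h
    rw [gStar, if_neg h] at hpg; linarith
  obtain ⟨a, h0, h1, h2, -⟩ := hex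
  calc p = (∑ j, a j) * p := by rw [h1, one_mul]
    _ = ∑ j, a j * p := Finset.sum_mul _ _ _
    _ ≤ ∑ j, b j := Finset.sum_le_sum fun j _ => h2 j

lemma km_mem_priceSet {b : Fin n → ℝ} {k : ℕ} (hb : ∀ j, 0 ≤ b j) (hk1 : 1 ≤ k) (hk2 : k ≤ n)
    (hm : 0 < nthSmallest b (n - k)) (hg0 : 0 < g) :
    ((k:ℝ) * nthSmallest b (n-k)) ∈ {p : ℝ | 0 < p ∧ gStar b k p ≤ g} := by
  have hkR : (0:ℝ) < (k:ℝ) := by exact_mod_cast hk1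
  have hp : 0 < (k:ℝ) * nthSmallest b (n-k) := by positivity
  refine ⟨hp, ?_⟩
  have h := gStar_le_flexGini (k := k) hk1 (eqAlloc_feasible hb hk1 hk2 hp le_rfl)
  rw [flexGini_eqAlloc hk1 hk2] at h
  linarith

lemma pStar_pos {b : Fin n → ℝ} {k : ℕ} (hb : ∀ j, 0 ≤ b j) (hk1 : 1 ≤ k) (hk2 : k ≤ n)
    (hm : 0 < nthSmallest b (n - k)) (hg0 : 0 < g) (hg1 : g < 1) :
    0 < pStar b k g := by
  have hkR : (0:ℝ) < (k:ℝ) := by exact_mod_cast hk1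
  have h : (k:ℝ) * nthSmallest b (n-k) ≤ pStar b k g :=
    le_csSup (priceSet_bddAbove hg1 b k) (km_mem_priceSet hb hk1 hk2 hm hg0)
  have hp : 0 < (k:ℝ) * nthSmallest b (n-k) := by positivity
  linarith

lemma feasible_scale {b : Fin n → ℝ} (hb : ∀ j, 0 ≤ b j) (i : Fin n) {k : ℕ} {x y p : ℝ}
    (hx : 0 < x) (hxy : x ≤ y) {a : Fin n → ℝ}
    (ha : Feasible (Function.update b i y) k p a) :
    Feasible (Function.update b i x) k (p * (x/y)) a := by
  have hy : 0 < y := lt_of_lt_of_le hx hxy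
  obtain ⟨h0, h1, h2, h3⟩ := ha
  refine ⟨h0, h1, fun j => ?_, h3⟩
  rcases eq_or_ne j i with rfl | hne
  · have hj := h2 j
    rw [Function.update_self] at hj ⊢
    calc a j * (p * (x/y)) = (a j * p) * (x/y) := by ring
      _ ≤ y * (x/y) := mul_le_mul_of_nonneg_right hj (by positivity)
      _ = x := by field_simp
  · have hj := h2 j
    rw [Function.update_of_ne hne] at hj ⊢
    calc a j * (p * (x/y)) = (a j * p) * (x/y) := by ring
      _ ≤ b j * (x/y) := mul_le_mul_of_nonneg_right hj (by positivity)
      _ ≤ b j := mul_le_of_le_one_right (hb j) (div_le_one_of_le₀ hxy hy.le)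

lemma gStar_scale {b : Fin n → ℝ} (hb : ∀ j, 0 ≤ b j) (i : Fin n) {k : ℕ} (hk : 1 ≤ k)
    {x y p : ℝ} (hx : 0 < x) (hxy : x ≤ y)
    (hne : ∃ a, Feasible (Function.update b i y) k p a) :
    gStar (Function.update b i x) k (p * (x/y)) ≤ gStar (Function.update b i y) k p := by
  classical
  obtain ⟨a0, ha0⟩ := hne
  rw [gStar, if_pos ⟨a0, feasible_scale hb i hx hxy ha0⟩, gStar, if_pos ⟨a0, ha0⟩]
  apply csInf_le_csInf
  · refine ⟨-2, ?_⟩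
    rintro z ⟨a', ha', rfl⟩
    exact flexGini_lb hk a' ha'.1
  · exact ⟨flexGini k a0, a0, ha0, rfl⟩
  · rintro z ⟨a', ha', rfl⟩
    exact ⟨a', feasible_scale hb i hx hxy ha', rfl⟩

lemma pStar_scale {b : Fin n → ℝ} (hb : ∀ j, 0 ≤ b j) (i : Fin n) {k : ℕ}
    (hk1 : 1 ≤ k) (hk2 : k ≤ n) {x y : ℝ} (hx : 0 < x) (hxy : x ≤ y)
    (hmy : 0 < nthSmallest (Function.update b i y) (n-k))
    (hg0 : 0 < g) (hg1 : g < 1)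
    (hby : ∀ j, 0 ≤ Function.update b i y j) :
    pStar (Function.update b i y) k g ≤ (y/x) * pStar (Function.update b i x) k g := by
  have hy : 0 < y := lt_of_lt_of_le hx hxy
  rw [pStar]
  apply csSup_le ⟨_, km_mem_priceSet hby hk1 hk2 hmy hg0⟩
  intro p hp
  obtain ⟨hp0, hpg⟩ := hp
  have hex : ∃ a, Feasible (Function.update b i y) k p a := by
    by_contra h
    rw [gStar, if_neg h] at hpg; linarith
  have hq : (p * (x/y)) ∈ {q : ℝ | 0 < q ∧ gStar (Function.update b i x) k q ≤ g} :=
    ⟨by positivity, le_trans (gStar_scale hb i hk1 hx hxy hex) hpg⟩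
  have hqle : p * (x/y) ≤ pStar (Function.update b i x) k g :=
    le_csSup (priceSet_bddAbove hg1 _ k) hq
  have hid : p = (p * (x/y)) * (y/x) := by field_simp
  calc p = (p * (x/y)) * (y/x) := hid
    _ ≤ pStar (Function.update b i x) k g * (y/x) :=
        mul_le_mul_of_nonneg_right hqle (by positivity)
    _ = (y/x) * pStar (Function.update b i x) k g := mul_comm _ _

end Aux4

/-- The ratio `bᵢ / p*_k(bᵢ, b₋ᵢ)` is nondecreasing in `bᵢ` (on the domain
where `p*_k` is defined); consequently `bᵢ / p*(bᵢ, b₋ᵢ)` with `p*(b) = max_{k ∈ K} p*_k(b)`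
is also nondecreasing in `bᵢ`. -/
theorem budget_over_price_mono {n : ℕ} (g : ℝ) (hg : g ∈ Set.Ioo (0 : ℝ) 1)
    (b : Fin n → ℝ) (hnn : ∀ j, 0 ≤ b j) (i : Fin n) :
    (∀ k : ℕ, 1 ≤ k → k ≤ n → ∀ x y : ℝ, 0 ≤ x → x ≤ y →
      0 < nthSmallest (Function.update b i x) (n - k) →
      0 < nthSmallest (Function.update b i y) (n - k) →
      x / pStar (Function.update b i x) k g ≤ y / pStar (Function.update b i y) k g) ∧
      ∀ K : Finset ℕ, K.Nonempty → (∀ k ∈ K, 1 ≤ k ∧ k ≤ n) → ∀ x y : ℝ, 0 ≤ x → x ≤ y →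
        (∀ k ∈ K, 0 < nthSmallest (Function.update b i x) (n - k)) →
        (∀ k ∈ K, 0 < nthSmallest (Function.update b i y) (n - k)) →
        x / pStarK (Function.update b i x) K g ≤ y / pStarK (Function.update b i y) K g := by
  obtain ⟨hg0, hg1⟩ := hg
  have hupd : ∀ z : ℝ, 0 ≤ z → ∀ j, 0 ≤ Function.update b i z j := by
    intro z hz j
    rcases eq_or_ne j i with rfl | h
    · rw [Function.update_self]; exact hz
    · rw [Function.update_of_ne h]; exact hnn j
  constructor
  · intro k hk1 hk2 x y hx0 hxy hmx hmy
    have hbx := hupd x hx0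
    have hby := hupd y (le_trans hx0 hxy)
    have hpx : 0 < pStar (Function.update b i x) k g :=
      pStar_pos hbx hk1 hk2 hmx hg0 hg1
    have hpy : 0 < pStar (Function.update b i y) k g :=
      pStar_pos hby hk1 hk2 hmy hg0 hg1
    rcases eq_or_lt_of_le hx0 with h0 | hx
    · rw [← h0, zero_div]
      exact div_nonneg (le_trans hx0 hxy) hpy.le
    · have hscale := pStar_scale hnn i hk1 hk2 hx hxy hmy hg0 hg1 hby
      rw [div_le_div_iff₀ hpx hpy]
      have h1 := mul_le_mul_of_nonneg_left hscale hx0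
      have h2 : x * ((y/x) * pStar (Function.update b i x) k g)
          = y * pStar (Function.update b i x) k g := by
        field_simp
      linarith
  · intro K hKne hKk x y hx0 hxy hmx hmy
    have hbx := hupd x hx0
    have hby := hupd y (le_trans hx0 hxy)
    have hbddx : BddAbove ((fun k => pStar (Function.update b i x) k g) '' (K : Set ℕ)) :=
      (K.finite_toSet.image _).bddAbove
    have hbddy : BddAbove ((fun k => pStar (Function.update b i y) k g) '' (K : Set ℕ)) :=
      (K.finite_toSet.image _).bddAbove
    obtain ⟨k0, hk0⟩ := hKne
    have hPx : 0 < pStarK (Function.update b i x) K g := by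
      have h1 : pStar (Function.update b i x) k0 g ≤ pStarK (Function.update b i x) K g :=
        le_csSup hbddx ⟨k0, hk0, rfl⟩
      have h2 := pStar_pos hbx (hKk k0 hk0).1 (hKk k0 hk0).2 (hmx k0 hk0) hg0 hg1
      linarith
    have hPy : 0 < pStarK (Function.update b i y) K g := by
      have h1 : pStar (Function.update b i y) k0 g ≤ pStarK (Function.update b i y) K g :=
        le_csSup hbddy ⟨k0, hk0, rfl⟩
      have h2 := pStar_pos hby (hKk k0 hk0).1 (hKk k0 hk0).2 (hmy k0 hk0) hg0 hg1
      linarith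
    rcases eq_or_lt_of_le hx0 with h0 | hx
    · rw [← h0, zero_div]
      exact div_nonneg (le_trans hx0 hxy) hPy.le
    · have hscale : pStarK (Function.update b i y) K g
          ≤ (y/x) * pStarK (Function.update b i x) K g := by
        rw [pStarK]
        refine csSup_le ⟨pStar (Function.update b i y) k0 g, ⟨k0, hk0, rfl⟩⟩ ?_
        rintro z ⟨k, hk, rfl⟩
        have hkK : k ∈ K := hk
        calc pStar (Function.update b i y) k g
            ≤ (y/x) * pStar (Function.update b i x) k g :=
              pStar_scale hnn i (hKk k hkK).1 (hKk k hkK).2 hx hxy (hmy k hkK) hg0 hg1 hby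
          _ ≤ (y/x) * pStarK (Function.update b i x) K g := by
              have hle : pStar (Function.update b i x) k g
                  ≤ pStarK (Function.update b i x) K g := le_csSup hbddx ⟨k, hkK, rfl⟩
              have : (0:ℝ) ≤ y/x := div_nonneg (by linarith) hx.le
              nlinarith
      rw [div_le_div_iff₀ hPx hPy]
      have h1 := mul_le_mul_of_nonneg_left hscale hx0
      have h2 : x * ((y/x) * pStarK (Function.update b i x) K g)
          = y * pStarK (Function.update b i x) K g := by
        field_simp
      linarith
end

section
/- Fix a winner number k with 1 ≤ k ≤ n, a Gini cap g ∈ (0,1), and a budget profile with strictly ordered positive budgets 0 < b_1 < b_2 < … < b_n. Let z = ⌊(n−k) + (k/2)·(g + (k+1)/k)⌋. Then for every agent i with i > z, decreasing b_i by ε > 0 decreases the maximum price by at most ε: p*_k(b) − p*_k(b_i − ε, b_{−i}) ≤ ε for all sufficiently small ε > 0; equivalently, the upper one-sided Dini derivative of b_i ↦ p*_k(b_i, b_{−i}) is at most 1 for i > z. -/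
open Finset

namespace PStarAux

open Finset

variable {n k : ℕ}

/-- The weight function: position `q` (0-based) gets weight `q + 1 - (n - k)`. -/
noncomputable def wt (n k : ℕ) : Fin n → ℝ := fun q => ((q : ℕ) : ℝ) + 1 - ((n - k : ℕ) : ℝ)

lemma sortedAsc_apply (x : Fin n → ℝ) (q : Fin n) :
    sortedAsc x q = x (Tuple.sort x q) := rfl

lemma sortedAsc_mono (x : Fin n → ℝ) : Monotone (sortedAsc x) :=
  Tuple.monotone_sort x

lemma card_zero_eq (x : Fin n → ℝ) :
    (univ.filter fun q => sortedAsc x q = 0).card = (univ.filter fun j => x j = 0).card := by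
  classical
  apply Finset.card_bij (fun q _ => Tuple.sort x q)
  · intro q hq
    simp only [mem_filter, mem_univ, true_and] at hq ⊢
    exact hq
  · intro q1 _ q2 _ h
    exact (Tuple.sort x).injective h
  · intro j hj
    simp only [mem_filter, mem_univ, true_and] at hj
    refine ⟨(Tuple.sort x).symm j, ?_, by simp⟩
    simp only [mem_filter, mem_univ, true_and, sortedAsc_apply, Equiv.apply_symm_apply]
    exact Finset.mem_filter.mpr ⟨mem_univ _, by simpa using hj⟩

lemma sorted_prefix_zero (x : Fin n → ℝ) (hx : ∀ j, 0 ≤ x j)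
    (hz : n - k ≤ (univ.filter fun j => x j = 0).card) (q : Fin n) (hq : (q : ℕ) < n - k) :
    sortedAsc x q = 0 := by
  classical
  by_contra h
  have hposq : 0 < sortedAsc x q := lt_of_le_of_ne (hx _) (Ne.symm h)
  have hsub : (univ.filter fun q' => sortedAsc x q' = 0) ⊆ Finset.Iio q := by
    intro q' hq'
    simp only [mem_filter, mem_univ, true_and] at hq'
    rw [Finset.mem_Iio]
    by_contra hle
    push_neg at hle
    have := sortedAsc_mono x hle
    rw [hq'] at this
    linarith
  have h1 := Finset.card_le_card hsub
  rw [card_zero_eq] at h1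
  have h2 : (Finset.Iio q).card = (q : ℕ) := by simp
  omega

lemma sum_tail (hkn : k ≤ n) (hk1 : 1 ≤ k) (f : Fin n → ℝ) (h0 : ∀ q : Fin n, (q : ℕ) < n - k → f q = 0) :
    ∑ q, f q = ∑ pos : Fin k, f ⟨n - k + (pos : ℕ), by have := pos.isLt; omega⟩ := by
  classical
  rw [← Finset.sum_filter_add_sum_filter_not univ (fun q : Fin n => (q : ℕ) < n - k) f]
  rw [Finset.sum_eq_zero (fun q hq => h0 q (by simpa using (mem_filter.mp hq).2)), zero_add]
  refine Finset.sum_nbij' (fun q => (⟨(q : ℕ) - (n - k), by have h1 := q.isLt; have h2 := hkn; have h3 := hk1; omega⟩ : Fin k))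
    (fun pos => (⟨n - k + (pos : ℕ), by have := pos.isLt; omega⟩ : Fin n)) ?_ ?_ ?_ ?_ ?_
  · intro q _; exact mem_univ _
  · intro pos _
    simp only [mem_filter, mem_univ, true_and, not_lt]
    show n - k ≤ n - k + (pos : ℕ)
    omega
  · intro q hq
    simp only [mem_filter, mem_univ, true_and, not_lt] at hq
    apply Fin.ext
    show n - k + ((q : ℕ) - (n - k)) = (q : ℕ)
    omega
  · intro pos _
    apply Fin.ext
    show n - k + (pos : ℕ) - (n - k) = (pos : ℕ)
    omega
  · intro q hq
    simp only [mem_filter, mem_univ, true_and, not_lt] at hq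
    congr 1
    apply Fin.ext
    show (q : ℕ) = n - k + ((q : ℕ) - (n - k))
    omega

lemma topk_weighted (hkn : k ≤ n) (hk1 : 1 ≤ k) (x : Fin n → ℝ) (hx : ∀ j, 0 ≤ x j)
    (hz : n - k ≤ (univ.filter fun j => x j = 0).card) :
    ∑ pos : Fin k, (((pos : ℕ) : ℝ) + 1) *
        sortedAsc x ⟨n - k + (pos : ℕ), by have := pos.isLt; omega⟩ =
      ∑ q, wt n k q * sortedAsc x q := by
  rw [sum_tail hkn hk1 (fun q => wt n k q * sortedAsc x q)
    (fun q hq => by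
      show wt n k q * sortedAsc x q = 0
      rw [sorted_prefix_zero x hx hz q hq, mul_zero])]
  refine Finset.sum_congr rfl fun pos _ => ?_
  have hw : wt n k (⟨n - k + (pos : ℕ), by have := pos.isLt; omega⟩ : Fin n)
      = ((pos : ℕ) : ℝ) + 1 := by
    show (((n - k + (pos : ℕ) : ℕ) : ℝ) + 1 - ((n - k : ℕ) : ℝ)) = ((pos : ℕ) : ℝ) + 1
    push_cast
    ring
  rw [hw]

lemma topk_sum (hkn : k ≤ n) (hk1 : 1 ≤ k) (x : Fin n → ℝ) (hx : ∀ j, 0 ≤ x j)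
    (hz : n - k ≤ (univ.filter fun j => x j = 0).card) :
    ∑ pos : Fin k, sortedAsc x ⟨n - k + (pos : ℕ), by have := pos.isLt; omega⟩ = ∑ j, x j := by
  rw [← sum_tail hkn hk1 (sortedAsc x) (sorted_prefix_zero x hx hz)]
  exact Equiv.sum_comp (Tuple.sort x) x

lemma wt_mono : Monotone (wt n k) := by
  intro q1 q2 h
  have : (q1 : ℕ) ≤ (q2 : ℕ) := h
  unfold wt
  have := (Nat.cast_le (α := ℝ)).mpr this
  linarith

lemma rearrange (x : Fin n → ℝ) (σ : Equiv.Perm (Fin n)) :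
    ∑ q, wt n k q * x (σ q) ≤ ∑ q, wt n k q * sortedAsc x q := by
  have hmv : Monovary (wt n k) (sortedAsc x) := by
    intro q1 q2 h
    refine wt_mono (le_of_not_gt fun hc => absurd h (not_lt.mpr ?_))
    exact sortedAsc_mono x hc.le
  have hpt : ∀ q, x (σ q) = sortedAsc x ((σ.trans (Tuple.sort x).symm) q) := by
    intro q
    simp [sortedAsc_apply]
  calc ∑ q, wt n k q * x (σ q)
      = ∑ q, wt n k q * sortedAsc x ((σ.trans (Tuple.sort x).symm) q) := by
        simp_rw [hpt]
    _ ≤ ∑ q, wt n k q * sortedAsc x q :=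
        hmv.sum_mul_comp_perm_le_sum_mul (σ := σ.trans (Tuple.sort x).symm)

lemma pos_ge (x : Fin n → ℝ) (i : Fin n) (h : ∀ j, j < i → x j ≤ x i) :
    (i : ℕ) ≤ (((Tuple.sort x).symm i : Fin n) : ℕ) := by
  classical
  set σ := Tuple.sort x with hσ
  obtain ⟨hmon, htie⟩ := (Tuple.eq_sort_iff (f := x) (σ := σ)).mp hσ
  have key : ∀ j : Fin n, j < i → σ.symm j < σ.symm i := by
    intro j hj
    rcases lt_or_eq_of_le (h j hj) with hlt | heq
    · by_contra hc
      push_neg at hc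
      have h2 := hmon hc
      simp only [Function.comp_apply, Equiv.apply_symm_apply] at h2
      linarith
    · have hne : σ.symm j ≠ σ.symm i := fun hh => (ne_of_lt hj) (σ.symm.injective hh)
      rcases lt_or_gt_of_ne hne with h1 | h1
      · exact h1
      · exfalso
        have h3 := htie _ _ h1 (by simp [heq])
        simp only [Equiv.apply_symm_apply] at h3
        exact absurd h3 (not_lt.mpr hj.le)
  have hcard := Finset.card_le_card_of_injOn (s := Finset.Iio i) (t := Finset.Iio (σ.symm i)) (fun j => σ.symm j)
    (fun j hj => by
      rw [Finset.mem_coe, Finset.mem_Iio] at hj ⊢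
      exact key j hj)
    (fun a _ b _ hab => σ.symm.injective hab)
  rw [Fin.card_Iio, Fin.card_Iio] at hcard
  exact hcard

lemma flexGini_eq (hkn : k ≤ n) (hk1 : 1 ≤ k) (p : ℝ) (b a : Fin n → ℝ) (ha : Feasible b k p a) :
    flexGini k a = 2 * (∑ q, wt n k q * sortedAsc a q) / k - ((k : ℝ) + 1) / k := by
  obtain ⟨h1, h2, _, h4⟩ := ha
  rw [flexGini, dif_pos hkn, gini]
  rw [topk_weighted hkn hk1 a h1 h4, topk_sum hkn hk1 a h1 h4, h2, mul_one]

lemma wtsum_nonneg (x : Fin n → ℝ) (hx : ∀ j, 0 ≤ x j)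
    (hz : n - k ≤ (univ.filter fun j => x j = 0).card) :
    0 ≤ ∑ q, wt n k q * sortedAsc x q := by
  refine Finset.sum_nonneg fun q _ => ?_
  rcases lt_or_ge (q : ℕ) (n - k) with hq | hq
  · rw [sorted_prefix_zero x hx hz q hq, mul_zero]
  · refine mul_nonneg ?_ (hx _)
    unfold wt
    have := (Nat.cast_le (α := ℝ)).mpr hq
    linarith

lemma flexGini_lb (hkn : k ≤ n) (hk1 : 1 ≤ k) (p : ℝ) (b a : Fin n → ℝ)
    (ha : Feasible b k p a) : -2 ≤ flexGini k a := by
  rw [flexGini_eq hkn hk1 p b a ha]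
  have hW := wtsum_nonneg a ha.1 ha.2.2.2
  have hk0 : (0 : ℝ) < k := by exact_mod_cast hk1
  have h1 : ((k : ℝ) + 1) / k ≤ 2 := by
    rw [div_le_iff₀ hk0]
    have : (1 : ℝ) ≤ k := by exact_mod_cast hk1
    linarith
  have h2 : 0 ≤ 2 * (∑ q, wt n k q * sortedAsc a q) / k := by positivity
  linarith

lemma exists_feasible_of_gStar_le {b : Fin n → ℝ} {k : ℕ} {p g : ℝ} (hg1 : g < 1)
    (h : gStar b k p ≤ g) : ∃ a, Feasible b k p a := by
  by_contra hno
  rw [gStar, if_neg hno] at h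
  linarith

lemma price_le_sum (b : Fin n → ℝ) (k : ℕ) (p : ℝ) (a : Fin n → ℝ)
    (h : Feasible b k p a) : p ≤ ∑ j, b j := by
  calc p = ∑ j, a j * p := by rw [← Finset.sum_mul, h.2.1, one_mul]
    _ ≤ ∑ j, b j := Finset.sum_le_sum fun j _ => h.2.2.1 j

/-- The key transfer construction. -/
lemma transfer (hkn : k ≤ n) (hk1 : 1 ≤ k) (b : Fin n → ℝ) (i : Fin n) (p ε : ℝ)
    (hεp : ε < p) (hε0 : 0 < ε) (hεb : ε < b i) (hb0 : ∀ j, 0 ≤ b j)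
    (hbj : ∀ j, j < i → b j ≤ b i - ε)
    (a : Fin n → ℝ) (ha : Feasible b k p a) :
    ∃ a', Feasible (Function.update b i (b i - ε)) k (p - ε) a' ∧
      ((∑ q, wt n k q * sortedAsc a q) ≤ ((i : ℕ) : ℝ) + 1 - ((n - k : ℕ) : ℝ) →
        flexGini k a' ≤ flexGini k a) := by
  classical
  obtain ⟨han, hsum, hbud, hzero⟩ := ha
  have hp0 : 0 < p := lt_trans hε0 hεp
  have hpε : 0 < p - ε := by linarith
  set c : ℝ := (b i - ε) / (p - ε) with hc
  have hc0 : 0 < c := div_pos (by linarith) hpε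
  have hcmul : c * (p - ε) = b i - ε := div_mul_cancel₀ _ (ne_of_gt hpε)
  by_cases hgood : a i ≤ c
  · refine ⟨a, ⟨han, hsum, ?_, hzero⟩, fun _ => le_refl _⟩
    intro j
    by_cases hj : j = i
    · subst hj
      rw [Function.update_self]
      calc a j * (p - ε) ≤ c * (p - ε) := by
            exact mul_le_mul_of_nonneg_right hgood (le_of_lt hpε)
        _ = b j - ε := hcmul
    · rw [Function.update_of_ne hj]
      calc a j * (p - ε) ≤ a j * p := by
            exact mul_le_mul_of_nonneg_left (by linarith) (han j)
        _ ≤ b j := hbud j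
  · push_neg at hgood
    have hai1 : a i ≤ 1 := by
      have := Finset.single_le_sum (f := a) (fun j _ => han j) (mem_univ i)
      rw [hsum] at this
      exact this
    have hailt : a i < 1 := by
      rcases lt_or_eq_of_le hai1 with h | h
      · exact h
      · exfalso
        have hpb : p ≤ b i := by
          have := hbud i
          rw [h, one_mul] at this
          exact this
        have : (1 : ℝ) ≤ c := by
          rw [hc, le_div_iff₀ hpε]
          linarith
        linarith
    set t : ℝ := (a i - c) / (1 - a i) with ht
    have h1a : (0 : ℝ) < 1 - a i := by linarith
    have ht0 : 0 ≤ t := le_of_lt (div_pos (by linarith) h1a)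
    have htmul : t * (1 - a i) = a i - c := div_mul_cancel₀ _ (ne_of_gt h1a)
    have htp : (1 + t) * (p - ε) ≤ p := by
      have h1 : (a i - c) * (p - ε) = a i * (p - ε) - (b i - ε) := by
        rw [sub_mul, hcmul]
      have h2 : a i * p ≤ b i := hbud i
      have h3 : t * (p - ε) ≤ ε := by
        rw [div_mul_eq_mul_div, div_le_iff₀ h1a]
        nlinarith
      nlinarith
    set a' : Fin n → ℝ := fun j => if j = i then c else (1 + t) * a j with ha'
    have ha'i : a' i = c := by simp [ha']
    have ha'j : ∀ j, j ≠ i → a' j = (1 + t) * a j := by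
      intro j hj; simp [ha', hj]
    have ha'n : ∀ j, 0 ≤ a' j := by
      intro j
      by_cases hj : j = i
      · rw [hj, ha'i]; exact le_of_lt hc0
      · rw [ha'j j hj]; exact mul_nonneg (by linarith) (han j)
    have hpt : ∀ j, a' j = (1 + t) * a j - (if j = i then t else 0) := by
      intro j
      by_cases hj : j = i
      · subst hj
        rw [ha'i, if_pos rfl]
        nlinarith [htmul]
      · rw [ha'j j hj, if_neg hj, sub_zero]
    have ha'sum : ∑ j, a' j = 1 := by
      have : ∑ j, a' j = ∑ j, ((1 + t) * a j - (if j = i then t else 0)) := by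
        exact Finset.sum_congr rfl fun j _ => hpt j
      rw [this, Finset.sum_sub_distrib, ← Finset.mul_sum, hsum, Finset.sum_ite_eq' univ i
        (fun _ => t), if_pos (mem_univ i)]
      ring
    have ha'bud : ∀ j, a' j * (p - ε) ≤ Function.update b i (b i - ε) j := by
      intro j
      by_cases hj : j = i
      · subst hj
        rw [ha'i, Function.update_self, hcmul]
      · rw [ha'j j hj, Function.update_of_ne hj]
        calc (1 + t) * a j * (p - ε) = a j * ((1 + t) * (p - ε)) := by ring
          _ ≤ a j * p := mul_le_mul_of_nonneg_left htp (han j)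
          _ ≤ b j := hbud j
    have ha'zero : n - k ≤ (univ.filter fun j => a' j = 0).card := by
      refine le_trans hzero (Finset.card_le_card ?_)
      intro j hj
      simp only [mem_filter, mem_univ, true_and] at hj ⊢
      by_cases hji : j = i
      · exfalso
        rw [hji] at hj
        rw [hj] at hgood
        linarith
      · rw [ha'j j hji, hj, mul_zero]
    have hfeas' : Feasible (Function.update b i (b i - ε)) k (p - ε) a' :=
      ⟨ha'n, ha'sum, ha'bud, ha'zero⟩
    refine ⟨a', hfeas', ?_⟩
    intro hW
    -- Gini comparison
    have hfeasb : Feasible b k p a := ⟨han, hsum, hbud, hzero⟩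
    have hlow : ∀ j, j < i → a' j ≤ a' i := by
      intro j hj
      have hji : j ≠ i := ne_of_lt hj
      rw [ha'j j hji, ha'i]
      have h1 : (1 + t) * a j * (p - ε) ≤ b j := by
        calc (1 + t) * a j * (p - ε) = a j * ((1 + t) * (p - ε)) := by ring
          _ ≤ a j * p := mul_le_mul_of_nonneg_left htp (han j)
          _ ≤ b j := hbud j
      have h2 : (1 + t) * a j * (p - ε) ≤ c * (p - ε) := by
        rw [hcmul]
        exact le_trans h1 (hbj j hj)
      exact le_of_mul_le_mul_right h2 hpε
    set σ' := Tuple.sort a' with hσ'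
    set q₀ : Fin n := σ'.symm i with hq₀
    have hq₀ge : (i : ℕ) ≤ (q₀ : ℕ) := pos_ge a' i hlow
    have hwq₀ : ((i : ℕ) : ℝ) + 1 - ((n - k : ℕ) : ℝ) ≤ wt n k q₀ := by
      unfold wt
      have := (Nat.cast_le (α := ℝ)).mpr hq₀ge
      linarith
    have hSA' : ∑ q, wt n k q * sortedAsc a' q =
        (1 + t) * (∑ q, wt n k q * a (σ' q)) - wt n k q₀ * t := by
      have step1 : ∀ q : Fin n, wt n k q * sortedAsc a' q =
          (1 + t) * (wt n k q * a (σ' q)) - wt n k q * (if q = q₀ then t else 0) := by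
        intro q
        have hsq : sortedAsc a' q = a' (σ' q) := rfl
        rw [hsq, hpt (σ' q)]
        simp only [Equiv.apply_eq_iff_eq_symm_apply, ← hq₀]
        ring
      rw [Finset.sum_congr rfl fun q _ => step1 q, Finset.sum_sub_distrib, ← Finset.mul_sum]
      congr 1
      have : ∀ q : Fin n, wt n k q * (if q = q₀ then t else 0) =
          (if q = q₀ then wt n k q₀ * t else 0) := by
        intro q
        by_cases h : q = q₀
        · subst h; simp
        · simp [h]
      rw [Finset.sum_congr rfl fun q _ => this q, Finset.sum_ite_eq' univ q₀
        (fun _ => wt n k q₀ * t), if_pos (mem_univ q₀)]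
    have hre : ∑ q, wt n k q * a (σ' q) ≤ ∑ q, wt n k q * sortedAsc a q :=
      rearrange a σ'
    have hSA'le : ∑ q, wt n k q * sortedAsc a' q ≤ ∑ q, wt n k q * sortedAsc a q := by
      rw [hSA']
      have h1 : (1 + t) * (∑ q, wt n k q * a (σ' q)) ≤
          (1 + t) * (∑ q, wt n k q * sortedAsc a q) :=
        mul_le_mul_of_nonneg_left hre (by linarith)
      have h2 : (((i : ℕ) : ℝ) + 1 - ((n - k : ℕ) : ℝ)) * t ≤ wt n k q₀ * t :=
        mul_le_mul_of_nonneg_right hwq₀ ht0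
      nlinarith [mul_le_mul_of_nonneg_right hW ht0]
    rw [flexGini_eq hkn hk1 (p - ε) (Function.update b i (b i - ε)) a' hfeas',
      flexGini_eq hkn hk1 p b a hfeasb]
    have hk0 : (0 : ℝ) < k := by exact_mod_cast hk1
    have hdiv := (div_le_div_iff_of_pos_right hk0).mpr
      (by linarith : 2 * (∑ q, wt n k q * sortedAsc a' q) ≤ 2 * (∑ q, wt n k q * sortedAsc a q))
    linarith

end PStarAux

open PStarAux in
/-- With strictly ordered positive budgets, let
`z = ⌊(n-k) + (k/2)·(g + (k+1)/k)⌋`. For every agent `i` with (1-based) index `> z`,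
decreasing `bᵢ` by a sufficiently small `ε > 0` decreases the maximum price by at most `ε`:
`p*_k(b) - p*_k(bᵢ - ε, b₋ᵢ) ≤ ε`. -/
theorem pStar_dini_bound_high_agents {n : ℕ} (g : ℝ) (hg : g ∈ Set.Ioo (0 : ℝ) 1)
    (b : Fin n → ℝ) (hmono : StrictMono b) (hpos : ∀ j, 0 < b j)
    (k : ℕ) (hk1 : 1 ≤ k) (hkn : k ≤ n) (i : Fin n)
    (hi : ⌊((n : ℝ) - k) + ((k : ℝ) / 2) * (g + ((k : ℝ) + 1) / k)⌋ < ((i : ℕ) : ℤ) + 1) :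
    ∀ᶠ ε in nhdsWithin (0 : ℝ) (Set.Ioi 0),
      pStar b k g - pStar (Function.update b i (b i - ε)) k g ≤ ε := by
  classical
  obtain ⟨hg0, hg1⟩ := hg
  have hk0 : (0 : ℝ) < k := by exact_mod_cast hk1
  set Zr : ℝ := ((k : ℝ) / 2) * (g + ((k : ℝ) + 1) / k) with hZrdef
  have hZrval : 2 * Zr = (k : ℝ) * g + ((k : ℝ) + 1) := by
    rw [hZrdef]
    field_simp
  have hm : ((n : ℝ) - k) + Zr < ((i : ℕ) : ℝ) + 1 := by
    have h := Int.floor_lt.mp hi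
    push_cast at h
    exact h
  have hZr1 : (1 : ℝ) ≤ Zr := by
    have hk1R : (1 : ℝ) ≤ k := by exact_mod_cast hk1
    nlinarith
  have hnk0 : (0 : ℝ) ≤ (n : ℝ) - k := by
    have : (k : ℝ) ≤ n := by exact_mod_cast hkn
    linarith
  have hi1 : 1 ≤ (i : ℕ) := by
    by_contra h
    push_neg at h
    have h0 : ((i : ℕ) : ℝ) = 0 := by
      have : (i : ℕ) = 0 := by omega
      rw [this]
      norm_num
    rw [h0] at hm
    linarith
  set pr : Fin n := ⟨(i : ℕ) - 1, by have := i.isLt; omega⟩ with hprdef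
  have hpri : pr < i := by
    rw [Fin.lt_def]
    simp only [hprdef]
    omega
  have hε₀ : 0 < b i - b pr := sub_pos.mpr (hmono hpri)
  filter_upwards [Ioo_mem_nhdsGT_of_mem (Set.mem_Ico.mpr ⟨le_refl (0 : ℝ), hε₀⟩)] with ε hε
  obtain ⟨hε0, hεlt⟩ := hε
  have hεb : ε < b i := by linarith [hpos pr]
  have hbj : ∀ j, j < i → b j ≤ b i - ε := by
    intro j hj
    have hjpr : j ≤ pr := by
      rw [Fin.le_def]
      simp only [hprdef]
      rw [Fin.lt_def] at hj
      omega
    have : b j ≤ b pr := hmono.monotone hjpr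
    linarith
  set b' := Function.update b i (b i - ε) with hb'def
  have hps' : 0 ≤ pStar b' k g := Real.sSup_nonneg fun x hx => hx.1.le
  rw [sub_le_iff_le_add]
  refine Real.sSup_le ?_ (by linarith)
  rintro p ⟨hp0, hpg⟩
  rcases le_or_gt p ε with hcase | hpε
  · linarith
  have hpε0 : 0 < p - ε := by linarith
  have hfeas : ∃ a, Feasible b k p a := exists_feasible_of_gStar_le hg1 hpg
  set mR : ℝ := ((i : ℕ) : ℝ) + 1 - ((n - k : ℕ) : ℝ) with hmRdef
  have hcast : ((n - k : ℕ) : ℝ) = (n : ℝ) - k := by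
    rw [Nat.cast_sub hkn]
  have hZm : Zr < mR := by
    rw [hmRdef, hcast]
    linarith
  have hbddb : BddBelow (flexGini k '' {a | Feasible b k p a}) := by
    refine ⟨-2, ?_⟩
    rintro x ⟨a, haf, rfl⟩
    exact flexGini_lb hkn hk1 p b a haf
  have hneb : (flexGini k '' {a | Feasible b k p a}).Nonempty := by
    obtain ⟨a, ha⟩ := hfeas
    exact ⟨flexGini k a, Set.mem_image_of_mem _ ha⟩
  have hext : ∀ δ : ℝ, 0 < δ → ∃ a, Feasible b k p a ∧ flexGini k a < g + δ := by
    intro δ hδ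
    have hg' : sInf (flexGini k '' {a | Feasible b k p a}) ≤ g := by
      rw [gStar, if_pos hfeas] at hpg
      exact hpg
    obtain ⟨x, hx, hxlt⟩ := (Real.sInf_le_iff hbddb hneb).mp hg' δ hδ
    obtain ⟨a, haf, rfl⟩ := hx
    exact ⟨a, haf, hxlt⟩
  set δ₀ : ℝ := (mR - Zr) / k with hδ₀def
  have hδ₀ : 0 < δ₀ := div_pos (by linarith) hk0
  have hWb : ∀ a : Fin n → ℝ, Feasible b k p a → flexGini k a < g + δ₀ →
      ∑ q, wt n k q * sortedAsc a q ≤ mR := by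
    intro a haf hfg
    rw [flexGini_eq hkn hk1 p b a haf] at hfg
    set W := ∑ q, wt n k q * sortedAsc a q with hWdef
    have h2 : 2 * W / k < g + δ₀ + ((k : ℝ) + 1) / k := by linarith
    have h3 : 2 * W < (g + δ₀ + ((k : ℝ) + 1) / k) * k := (div_lt_iff₀ hk0).mp h2
    have h4 : ((k : ℝ) + 1) / k * k = (k : ℝ) + 1 := div_mul_cancel₀ _ (ne_of_gt hk0)
    have h5 : δ₀ * k = mR - Zr := by
      rw [hδ₀def]
      exact div_mul_cancel₀ _ (ne_of_gt hk0)
    nlinarith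
  have htransfer : ∀ a : Fin n → ℝ, Feasible b k p a →
      ∃ a', Feasible b' k (p - ε) a' ∧
        ((∑ q, wt n k q * sortedAsc a q) ≤ mR → flexGini k a' ≤ flexGini k a) := by
    intro a haf
    exact transfer hkn hk1 b i p ε hpε hε0 hεb (fun j => (hpos j).le) hbj a haf
  have hfeas' : ∃ a', Feasible b' k (p - ε) a' := by
    obtain ⟨a, ha⟩ := hfeas
    obtain ⟨a', ha', _⟩ := htransfer a ha
    exact ⟨a', ha'⟩
  have hkey : gStar b' k (p - ε) ≤ g := by
    rw [gStar, if_pos hfeas']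
    have hbddb' : BddBelow (flexGini k '' {a | Feasible b' k (p - ε) a}) := by
      refine ⟨-2, ?_⟩
      rintro x ⟨a, haf, rfl⟩
      exact flexGini_lb hkn hk1 (p - ε) b' a haf
    have hneb' : (flexGini k '' {a | Feasible b' k (p - ε) a}).Nonempty := by
      obtain ⟨a', ha'⟩ := hfeas'
      exact ⟨flexGini k a', Set.mem_image_of_mem _ ha'⟩
    refine (Real.sInf_le_iff hbddb' hneb').mpr ?_
    intro δ hδ
    obtain ⟨a₂, ha₂, hfg₂⟩ := hext (min δ δ₀) (lt_min hδ hδ₀)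
    obtain ⟨a₂', hf₂', hg₂'⟩ := htransfer a₂ ha₂
    have hW₂ : ∑ q, wt n k q * sortedAsc a₂ q ≤ mR :=
      hWb a₂ ha₂ (lt_of_lt_of_le hfg₂ (by linarith [min_le_right δ δ₀]))
    refine ⟨flexGini k a₂', Set.mem_image_of_mem _ hf₂', ?_⟩
    calc flexGini k a₂' ≤ flexGini k a₂ := hg₂' hW₂
      _ < g + min δ δ₀ := hfg₂
      _ ≤ g + δ := by linarith [min_le_left δ δ₀]
  have hbddS' : BddAbove {q : ℝ | 0 < q ∧ gStar b' k q ≤ g} := by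
    refine ⟨∑ j, b' j, ?_⟩
    rintro q ⟨hq0, hqg⟩
    obtain ⟨a₃, ha₃⟩ := exists_feasible_of_gStar_le hg1 hqg
    exact price_le_sum b' k q a₃ ha₃
  have hfin : p - ε ≤ pStar b' k g := le_csSup hbddS' ⟨hpε0, hkey⟩
  linarith
end

section
/- Fix a Gini cap g ∈ (0,1), a finite set K of allowed winner numbers, an agent i with valuation v_i > 0, and the other agents' reported budgets b_{−i} (at least min(K) of which are positive). If p*(0, b_{−i}) ≥ v_i, then reporting a budget of 0 is a best response for agent i: for every report b_i ≥ 0, u_i(b_i, b_{−i}) ≤ 0 = u_i(0, b_{−i}). -/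
open Finset

lemma gini_lower {k : ℕ} (y : Fin k → ℝ) (hy : ∀ i, 0 ≤ y i) : -2 ≤ gini y := by
  unfold gini
  have hA : 0 ≤ ∑ i : Fin k, (((i:ℕ):ℝ)+1) * y i :=
    Finset.sum_nonneg fun i _ => mul_nonneg (by positivity) (hy i)
  have hB : 0 ≤ (k:ℝ) * ∑ i, y i :=
    mul_nonneg (by positivity) (Finset.sum_nonneg fun i _ => hy i)
  have h1 : 0 ≤ 2 * (∑ i : Fin k, (((i:ℕ):ℝ)+1) * y i) / ((k:ℝ) * ∑ i, y i) :=
    div_nonneg (by linarith) hB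
  have h2 : ((k:ℝ)+1)/k ≤ 2 := by
    rcases Nat.eq_zero_or_pos k with h | h
    · simp [h]
    · rw [div_le_iff₀ (by exact_mod_cast h)]
      have : (1:ℝ) ≤ k := by exact_mod_cast h
      linarith
  linarith

lemma flexGini_lower {n k : ℕ} (a : Fin n → ℝ) (ha : ∀ i, 0 ≤ a i) : -2 ≤ flexGini k a := by
  unfold flexGini
  split
  · exact gini_lower _ fun i => ha _
  · norm_num

lemma feasible_mono {n : ℕ} {b b' : Fin n → ℝ} (hb : ∀ j, b j ≤ b' j) {k : ℕ} {p : ℝ}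
    {a : Fin n → ℝ} (h : Feasible b k p a) : Feasible b' k p a :=
  ⟨h.1, h.2.1, fun j => (h.2.2.1 j).trans (hb j), h.2.2.2⟩

lemma gStar_mono_s15 {n : ℕ} {b b' : Fin n → ℝ} (hb : ∀ j, b j ≤ b' j) (k : ℕ) (p : ℝ)
    (hne : ∃ a, Feasible b k p a) : gStar b' k p ≤ gStar b k p := by
  classical
  have hne' : ∃ a, Feasible b' k p a := hne.imp fun a h => feasible_mono hb h
  unfold gStar
  rw [if_pos hne, if_pos hne']
  refine csInf_le_csInf ?_ ?_ (Set.image_mono fun a ha => feasible_mono hb ha)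
  · exact ⟨-2, by rintro y ⟨a, ha, rfl⟩; exact flexGini_lower a ha.1⟩
  · obtain ⟨a, ha⟩ := hne; exact ⟨flexGini k a, a, ha, rfl⟩

lemma priceSet_bdd {n : ℕ} (b : Fin n → ℝ) (hb : ∀ j, 0 ≤ b j) (k : ℕ) {g : ℝ} (hg : g < 1) :
    ∀ p ∈ {p : ℝ | 0 < p ∧ gStar b k p ≤ g}, p ≤ ∑ j, b j := by
  rintro p ⟨hp, hgs⟩
  have hfe : ∃ a, Feasible b k p a := by
    by_contra hno
    unfold gStar at hgs; rw [if_neg hno] at hgs; linarith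
  obtain ⟨a, _, ha2, ha3, _⟩ := hfe
  have h1 : (1:ℝ) ≤ (∑ j, b j) / p := by
    rw [← ha2, Finset.sum_div]
    exact Finset.sum_le_sum fun j _ => (le_div_iff₀ hp).mpr (ha3 j)
  exact (one_le_div hp).mp h1

lemma pStar_mono_s15 {n : ℕ} {b b' : Fin n → ℝ} (hb : ∀ j, b j ≤ b' j) (hb' : ∀ j, 0 ≤ b' j)
    (k : ℕ) {g : ℝ} (hg : g < 1) : pStar b k g ≤ pStar b' k g := by
  have hsub : {p : ℝ | 0 < p ∧ gStar b k p ≤ g} ⊆ {p : ℝ | 0 < p ∧ gStar b' k p ≤ g} := by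
    rintro p ⟨hp, hgs⟩
    have hne : ∃ a, Feasible b k p a := by
      by_contra hno
      unfold gStar at hgs; rw [if_neg hno] at hgs; linarith
    exact ⟨hp, (gStar_mono_s15 hb k p hne).trans hgs⟩
  rcases Set.eq_empty_or_nonempty {p : ℝ | 0 < p ∧ gStar b k p ≤ g} with h | h
  · unfold pStar
    rw [h, Real.sSup_empty]
    exact Real.sSup_nonneg fun x hx => hx.1.le
  · exact csSup_le_csSup ⟨∑ j, b' j, fun p hp => priceSet_bdd b' hb' k hg p hp⟩ h hsub

lemma pStarK_mono {n : ℕ} {b b' : Fin n → ℝ} (hb : ∀ j, b j ≤ b' j) (hb' : ∀ j, 0 ≤ b' j)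
    (K : Finset ℕ) (hK : K.Nonempty) {g : ℝ} (hg : g < 1) :
    pStarK b K g ≤ pStarK b' K g := by
  obtain ⟨k0, hk0⟩ := hK
  refine csSup_le ⟨pStar b k0 g, k0, by simpa using hk0, rfl⟩ ?_
  rintro y ⟨k, hk, rfl⟩
  refine (pStar_mono_s15 hb hb' k hg).trans (le_csSup ?_ ⟨k, hk, rfl⟩)
  exact (K.finite_toSet.image _).bddAbove

lemma capOf_nonneg {n : ℕ} (b : Fin n → ℝ) (k : ℕ) (p : ℝ) : 0 ≤ capOf b k p :=
  Real.sInf_nonneg fun x hx => hx.1.le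

/-- If `p*(0, b₋ᵢ) ≥ vᵢ`, then reporting a budget of `0` is a best response
for agent `i`: every report yields utility at most `0`, and reporting `0` yields utility `0`. -/
theorem pullout_best_response {n : ℕ} (g : ℝ) (hg : g ∈ Set.Ioo (0 : ℝ) 1)
    (K : Finset ℕ) (hK : K.Nonempty) (hKn : ∀ k ∈ K, 1 ≤ k ∧ k ≤ n)
    (i : Fin n) (b : Fin n → ℝ) (hnn : ∀ j, 0 ≤ b j)
    (hpos : K.min' hK ≤ (Finset.univ.filter fun j : Fin n => j ≠ i ∧ 0 < b j).card)
    (v : ℝ) (hv : 0 < v) (hp : v ≤ pStarK (Function.update b i 0) K g) :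
    (∀ x : ℝ, 0 ≤ x → util (Function.update b i x) K g i v ≤ 0) ∧
      util (Function.update b i 0) K g i v = 0 := by
  constructor
  · intro x hx
    set b0 := Function.update b i 0 with hb0
    set bx := Function.update b i x with hbx
    have hb0x : ∀ j, b0 j ≤ bx j := by
      intro j
      by_cases h : j = i
      · subst h; simp [hb0, hbx, hx]
      · simp [hb0, hbx, Function.update_of_ne h]
    have hbxnn : ∀ j, 0 ≤ bx j := by
      intro j
      by_cases h : j = i
      · subst h; simpa [hbx] using hx
      · simpa [hbx, Function.update_of_ne h] using hnn j
    have hpv : v ≤ pStarK bx K g :=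
      hp.trans (pStarK_mono hb0x hbxnn K hK hg.2)
    have hppos : 0 < pStarK bx K g := hv.trans_le hpv
    unfold util mechAlloc
    split
    · simp
    · refine mul_nonpos_of_nonneg_of_nonpos (le_min ?_ (capOf_nonneg _ _ _)) (by linarith)
      exact div_nonneg (by simpa [hbx] using hx) hppos.le
  · unfold util mechAlloc
    split
    · simp
    · rw [Function.update_self, zero_div, min_eq_left (capOf_nonneg _ _ _), zero_mul]
end

section
/- Let (y_1,…,y_n) be a nonnegative real vector sorted in ascending order with Σ_{i=1}^n y_i > 0, and suppose y_i = 0 for all i ≤ m for some m with 0 ≤ m < n. Then its Gini index satisfies G(y) = 2·(Σ_{i=1}^n i·y_i)/(n·Σ_{i=1}^n y_i) − (n+1)/n ≥ (2(m+1) − (n+1))/n. In particular, if m ≥ 75 and n = 100 the Gini index is at least 0.51, so for any Gini cap g < 1 there exist profiles where every allocation violates the cap under the standard (non-flexible) Gini index. -/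
open Finset

lemma gini_lb_aux {n m : ℕ} (y : Fin n → ℝ)
    (hnn : ∀ i, 0 ≤ y i) (hsum : 0 < ∑ i, y i) (hm : m < n)
    (hzero : ∀ i : Fin n, (i : ℕ) < m → y i = 0) :
    (2 * ((m : ℝ) + 1) - ((n : ℝ) + 1)) / n ≤ gini y := by
  have hn : (0 : ℝ) < n := by
    have : 0 < n := by omega
    exact_mod_cast this
  set T := ∑ i, y i with hT
  set S := ∑ i : Fin n, (((i : ℕ) : ℝ) + 1) * y i with hS
  have hkey : ((m : ℝ) + 1) * T ≤ S := by
    rw [hT, hS, Finset.mul_sum]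
    apply Finset.sum_le_sum
    intro i _
    rcases lt_or_ge (i : ℕ) m with h | h
    · rw [hzero i h]; ring_nf; rfl
    · apply mul_le_mul_of_nonneg_right _ (hnn i)
      have : (m : ℝ) ≤ (i : ℕ) := by exact_mod_cast h
      linarith
  have hdiv : 2 * ((m : ℝ) + 1) / n ≤ 2 * S / (n * T) := by
    rw [div_le_div_iff₀ hn (by positivity)]
    nlinarith
  have : gini y = 2 * S / (n * T) - ((n : ℝ) + 1) / n := rfl
  rw [this, sub_div]
  linarith

/-- If an ascending-sorted nonnegative vector with positive sum has its first
`m` entries equal to `0` (with `m < n`), then its Gini index is at least `(2(m+1) - (n+1))/n`.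
In particular, with `n = 100` and `m ≥ 75` the Gini index is at least `0.51`, so for any Gini
cap `g < 1` there exist profiles where every allocation violates the cap under the standard
(non-flexible) Gini index. -/
theorem gini_lower_bound_of_zeros {n : ℕ} (y : Fin n → ℝ) (hmono : Monotone y)
    (hnn : ∀ i, 0 ≤ y i) (hsum : 0 < ∑ i, y i) (m : ℕ) (hm : m < n)
    (hzero : ∀ i : Fin n, (i : ℕ) < m → y i = 0) :
    (2 * ((m : ℝ) + 1) - ((n : ℝ) + 1)) / n ≤ gini y ∧
      (n = 100 → 75 ≤ m → (0.51 : ℝ) ≤ gini y) ∧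
      ∀ g : ℝ, g < 1 → ∃ (n' m' : ℕ), m' < n' ∧
        ∀ y' : Fin n' → ℝ, Monotone y' → (∀ i, 0 ≤ y' i) → 0 < ∑ i, y' i →
          (∀ i : Fin n', (i : ℕ) < m' → y' i = 0) → g < gini y' := by
  refine ⟨gini_lb_aux y hnn hsum hm hzero, ?_, ?_⟩
  · intro hn100 hm75
    have h := gini_lb_aux y hnn hsum hm hzero
    have hmr : (75 : ℝ) ≤ m := by exact_mod_cast hm75
    have : (0.51 : ℝ) ≤ (2 * ((m : ℝ) + 1) - ((n : ℝ) + 1)) / n := by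
      subst hn100
      rw [le_div_iff₀ (by norm_num : (0:ℝ) < (100:ℕ))]
      push_cast
      linarith
    linarith
  · intro g hg
    obtain ⟨N, hN⟩ := exists_nat_one_div_lt (by linarith : (0:ℝ) < 1 - g)
    refine ⟨N + 1, N, Nat.lt_succ_self N, ?_⟩
    intro y' hmono' hnn' hsum' hzero'
    have h := gini_lb_aux y' hnn' hsum' (Nat.lt_succ_self N) hzero'
    have hNpos : (0 : ℝ) < (N : ℝ) + 1 := by positivity
    have hgt : g < (2 * ((N : ℝ) + 1) - (((N + 1 : ℕ) : ℝ) + 1)) / ((N + 1 : ℕ) : ℝ) := by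
      push_cast
      rw [lt_div_iff₀ hNpos]
      rw [div_lt_iff₀ hNpos] at hN
      nlinarith
    calc g < _ := hgt
      _ ≤ gini y' := h
end
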